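/- arXiv:2007.11905 — 3 statements merged into one kernel-verified Lean document; each statement's English description precedes it below -/
import Mathlib

section
/- Let U be an even MPO tensor generating a type II fMPU with antiperiodic boundary conditions, such that U/√d is a graded normal degenerate tensor. Then d is even and the number of physical indices n ∈ {0,…,d−1} with |n| = 0 equals the number with |n| = 1 (both equal to d/2). -/
open Matrix Kronecker
open scoped ComplexOrder

namespace FQCA

noncomputable section

/-- The sign `(-1)^x` associated with a parity `x ∈ ℤ₂`. -/
def sgn (x : ZMod 2) : ℂ := (-1 : ℂ) ^ x.val

/-- Entrywise complex conjugation of a matrix. -/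
def mconj {m n : Type*} (A : Matrix m n ℂ) : Matrix m n ℂ := A.map (starRingEnd ℂ)

/-- A diagonal matrix with diagonal entries `±1`. -/
def IsParityMatrix {ν : Type*} (Z : Matrix ν ν ℂ) : Prop :=
  Z.IsDiag ∧ ∀ α, Z α α = 1 ∨ Z α α = -1

/-- An even tensor: `Z * A i = (-1)^{|i|} A i * Z`. -/
def EvenTensor {ι ν : Type*} [Fintype ν] (p : ι → ZMod 2)
    (A : ι → Matrix ν ν ℂ) (Z : Matrix ν ν ℂ) : Prop :=
  ∀ i, Z * A i = sgn (p i) • (A i * Z)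

/-- The transfer matrix `E_A = Σ_i A^i ⊗ conj (A^i)`. -/
def transfer {ι ν : Type*} [Fintype ι] (A : ι → Matrix ν ν ℂ) :
    Matrix (ν × ν) (ν × ν) ℂ :=
  ∑ i, (A i) ⊗ₖ (mconj (A i))

/-- `P` is the orthogonal projector of a nonzero proper graded invariant subspace for `A`. -/
def GradedInvariantProj {ι ν : Type*} [Fintype ν] [DecidableEq ν]
    (A : ι → Matrix ν ν ℂ) (Z P : Matrix ν ν ℂ) : Prop :=
  P * P = P ∧ Pᴴ = P ∧ P ≠ 0 ∧ P ≠ 1 ∧ P * Z = Z * P ∧ ∀ i, A i * P = P * (A i * P)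

/-- A graded irreducible tensor: no nonzero proper graded invariant subspace. -/
def GradedIrreducible {ι ν : Type*} [Fintype ν] [DecidableEq ν]
    (A : ι → Matrix ν ν ℂ) (Z : Matrix ν ν ℂ) : Prop :=
  ¬ ∃ P, GradedInvariantProj A Z P

/-- A graded normal tensor, `mult = 1` (non-degenerate) or `2` (degenerate):
graded irreducible, `1` is an eigenvalue of the transfer matrix of algebraic multiplicity
`mult`, and all other eigenvalues have modulus `< 1`. -/
def GradedNormal {ι ν : Type*} [Fintype ι] [Fintype ν] [DecidableEq ν]
    (A : ι → Matrix ν ν ℂ) (Z : Matrix ν ν ℂ) (mult : ℕ) : Prop :=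
  GradedIrreducible A Z ∧
  (Matrix.charpoly (transfer A)).rootMultiplicity 1 = mult ∧
  ∀ μ ∈ spectrum ℂ (transfer A), μ ≠ 1 → ‖μ‖ < 1

/-- Graded Canonical Form: `A^i = ⊕ₖ μₖ Aₖ^i` with `Z` block diagonal in the same way and
every block a graded normal tensor. -/
def GCF {ι ν : Type*} [Fintype ι] [Fintype ν] [DecidableEq ν]
    (p : ι → ZMod 2) (A : ι → Matrix ν ν ℂ) (Z : Matrix ν ν ℂ) : Prop :=
  ∃ (g : ℕ) (Dk : Fin g → ℕ) (e : ν ≃ ((k : Fin g) × Fin (Dk k)))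
    (μ : Fin g → ℂ)
    (Ak : (k : Fin g) → ι → Matrix (Fin (Dk k)) (Fin (Dk k)) ℂ)
    (Zk : (k : Fin g) → Matrix (Fin (Dk k)) (Fin (Dk k)) ℂ),
    0 < g ∧
    (∀ i, Matrix.reindex e e (A i) = Matrix.blockDiagonal' (fun k => μ k • Ak k i)) ∧
    Matrix.reindex e e Z = Matrix.blockDiagonal' Zk ∧
    ∀ k, IsParityMatrix (Zk k) ∧ EvenTensor p (Ak k) (Zk k) ∧
      (GradedNormal (Ak k) (Zk k) 1 ∨ GradedNormal (Ak k) (Zk k) 2)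

/-- The coefficient `tr(A^{n₁} ⋯ A^{n_N})` of the fMPS with antiperiodic boundary
conditions generated by the tensor `A`. -/
def mpsCoeff {ι ν : Type*} [Fintype ν] [DecidableEq ν] {N : ℕ}
    (A : ι → Matrix ν ν ℂ) (n : Fin N → ι) : ℂ :=
  ((List.ofFn fun j => A (n j)).prod).trace

/-- The fermionic sign `σ(n,m) = Σ_{k<j} (|n_j|+|m_j|)·|m_k|` of an fMPO matrix element. -/
def mpoSign {ι : Type*} (p : ι → ZMod 2) {N : ℕ} (n m : Fin N → ι) : ZMod 2 :=
  ∑ jk ∈ Finset.univ.filter (fun jk : Fin N × Fin N => jk.2 < jk.1),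
    (p (n jk.1) + p (m jk.1)) * p (m jk.2)

/-- The fMPO with antiperiodic boundary conditions generated by the MPO tensor `U`. -/
def fMPO {ι : Type*} (p : ι → ZMod 2) {ν : Type*} [Fintype ν] [DecidableEq ν]
    (U : ι → ι → Matrix ν ν ℂ) (N : ℕ) :
    Matrix (Fin N → ι) (Fin N → ι) ℂ :=
  Matrix.of fun n m =>
    sgn (mpoSign p n m) * ((List.ofFn fun j => U (n j) (m j)).prod).trace

/-- The fMPO with periodic boundary conditions generated by the MPO tensor `U`
(parity operator `Z` inserted in the trace). -/
def fMPO_PBC {ι : Type*} (p : ι → ZMod 2) {ν : Type*} [Fintype ν] [DecidableEq ν]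
    (Z : Matrix ν ν ℂ) (U : ι → ι → Matrix ν ν ℂ) (N : ℕ) :
    Matrix (Fin N → ι) (Fin N → ι) ℂ :=
  Matrix.of fun n m =>
    sgn (mpoSign p n m) * (Z * (List.ofFn fun j => U (n j) (m j)).prod).trace

/-- The fermionic blocking sign `τ(n,m) = Σ_{j<l} |m_j|·(|n_l|+|m_l|)`. -/
def blockSign {ι : Type*} (p : ι → ZMod 2) {q : ℕ} (n m : Fin q → ι) : ZMod 2 :=
  ∑ jl ∈ Finset.univ.filter (fun jl : Fin q × Fin q => jl.1 < jl.2),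
    p (m jl.1) * (p (n jl.2) + p (m jl.2))

/-- The `q`-fold blocked MPO tensor, with the fermionic blocking signs. -/
def blocked {ι : Type*} (p : ι → ZMod 2) {ν : Type*} [Fintype ν] [DecidableEq ν]
    (U : ι → ι → Matrix ν ν ℂ) (q : ℕ) :
    (Fin q → ι) → (Fin q → ι) → Matrix ν ν ℂ :=
  fun n m => sgn (blockSign p n m) • ((List.ofFn fun j => U (n j) (m j)).prod)

/-- The right rank `r(U)`: rank of the matrix with entry
`(-1)^{|n||m|} (U^{n,m})_{α,β}` in row `(n,β)` and column `(m,α)`. -/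
def rightRank {ι ν : Type*} [Fintype ι] [Fintype ν]
    (p : ι → ZMod 2) (U : ι → ι → Matrix ν ν ℂ) : ℕ :=
  (Matrix.of fun (r c : ι × ν) => sgn (p r.1 * p c.1) * U r.1 c.1 c.2 r.2).rank

/-- The left rank `ℓ(U)`: rank of the matrix with entry `(U^{n,m})_{α,β}`
in row `(n,α)` and column `(m,β)`. -/
def leftRank {ι ν : Type*} [Fintype ι] [Fintype ν]
    (U : ι → ι → Matrix ν ν ℂ) : ℕ :=
  (Matrix.of fun (r c : ι × ν) => U r.1 c.1 r.2 c.2).rank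

/-- The Pauli matrix `σˣ`, indexed by `Bool`. -/
def pauliX : Matrix Bool Bool ℂ := Matrix.of fun a b => if a = b then 0 else 1

/-- The Pauli matrix `σᶻ`, indexed by `Bool`. -/
def pauliZ : Matrix Bool Bool ℂ := Matrix.diagonal (fun b => if b then -1 else 1)

/-- The single-site physical parity matrix `P = diag((-1)^{|i|})`. -/
def singleP {ι : Type*} [DecidableEq ι] (p : ι → ZMod 2) : Matrix ι ι ℂ :=
  Matrix.diagonal (fun i => sgn (p i))

/-- The parity of the doubled physical index `(n,m)` of an MPO tensor. -/
def doubledP {ι : Type*} (p : ι → ZMod 2) : ι × ι → ZMod 2 :=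
  fun nm => p nm.1 + p nm.2

/-- An MPO tensor regarded as a tensor in the doubled physical index. -/
def doubledT {ι ν : Type*} (U : ι → ι → Matrix ν ν ℂ) : ι × ι → Matrix ν ν ℂ :=
  fun nm => U nm.1 nm.2

/-- An MPO tensor rescaled by `c`, regarded as a tensor in the doubled physical index. -/
def mpoScaled {ι ν : Type*} (c : ℂ) (U : ι → ι → Matrix ν ν ℂ) : ι × ι → Matrix ν ν ℂ :=
  fun nm => c • U nm.1 nm.2

/-- The parity operator `σᶻ ⊗ I` on the bond space `Bool × Fin b`. -/
def ZBP (b : ℕ) : Matrix (Bool × Fin b) (Bool × Fin b) ℂ :=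
  pauliZ ⊗ₖ (1 : Matrix (Fin b) (Fin b) ℂ)

/-- Structure of a type II MPO tensor: `U^{n,m} = (σˣ)^{|n|+|m|} ⊗ N^{n,m}`. -/
def TypeIIStruct {d b : ℕ} (p : Fin d → ZMod 2)
    (U : Fin d → Fin d → Matrix (Bool × Fin b) (Bool × Fin b) ℂ) : Prop :=
  ∃ Nm : Fin d → Fin d → Matrix (Fin b) (Fin b) ℂ,
    ∀ n m', U n m' = (pauliX ^ (p n + p m').val) ⊗ₖ Nm n m'

/-- The parity matrix of the product grading on `q` sites. -/
def bigP {d : ℕ} (p : Fin d → ZMod 2) (q : ℕ) :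
    Matrix (Fin q → Fin d) (Fin q → Fin d) ℂ :=
  Matrix.diagonal (fun n => sgn (∑ i, p (n i)))

/-- The Jordan-Wigner embedding at site `j` of a local operator `O` homogeneous of
parity `o`: `P^{|O|} ⊗ ⋯ ⊗ P^{|O|} ⊗ O ⊗ I ⊗ ⋯ ⊗ I`. -/
def jordanWigner {d N : ℕ} (p : Fin d → ZMod 2) (o : ZMod 2)
    (O : Matrix (Fin d) (Fin d) ℂ) (j : Fin N) :
    Matrix (Fin N → Fin d) (Fin N → Fin d) ℂ :=
  Matrix.of fun n m =>
    (∏ l ∈ Finset.univ.filter (fun l : Fin N => l < j),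
      ((singleP p) ^ o.val) (n l) (m l)) *
    O (n j) (m j) *
    (∏ l ∈ Finset.univ.filter (fun l : Fin N => j < l),
      (if n l = m l then (1:ℂ) else 0))

/- ---------- general list lemmas ---------- -/

section ListLemmas

variable {R : Type*} [Semiring R] [Module ℂ R] [SMulCommClass ℂ R R] [IsScalarTower ℂ R R]

lemma prod_ofFn_sum_smul {ι : Type*} [Fintype ι] :
    ∀ (N : ℕ) (c : Fin N → ι → ℂ) (F : Fin N → ι → R),
    (List.ofFn fun j => ∑ i : ι, c j i • F j i).prod
      = ∑ g : Fin N → ι, (∏ j, c j (g j)) • (List.ofFn fun j => F j (g j)).prod := by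
  intro N
  induction N with
  | zero =>
      intro c F
      simp
  | succ N ih =>
      intro c F
      rw [List.ofFn_succ, List.prod_cons, ih (fun j => c j.succ) (fun j => F j.succ),
        Finset.sum_mul_sum,
        ← Equiv.sum_comp (Fin.consEquiv fun _ : Fin (N+1) => ι)
          (fun g : Fin (N+1) → ι => (∏ j, c j (g j)) • (List.ofFn fun j => F j (g j)).prod),
        Fintype.sum_prod_type]
      refine Finset.sum_congr rfl fun i _ => Finset.sum_congr rfl fun g _ => ?_
      rw [smul_mul_smul_comm]
      congr 1
      · rw [Fin.prod_univ_succ]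
        simp [Fin.consEquiv_apply]
      · rw [List.ofFn_succ, List.prod_cons]
        simp [Fin.consEquiv_apply]

lemma prod_ofFn_scalar {ι : Type*} [Fintype ι] (N : ℕ) (c : Fin N → ι → ℂ) :
    ∏ j, (∑ i : ι, c j i) = ∑ g : Fin N → ι, ∏ j, c j (g j) := by
  have h := prod_ofFn_sum_smul (R := ℂ) N c (fun _ _ => 1)
  simp only [smul_eq_mul, mul_one, List.ofFn_const, List.prod_replicate, one_pow] at h
  calc ∏ j, (∑ i : ι, c j i) = (List.ofFn fun j => ∑ i : ι, c j i).prod := (List.prod_ofFn).symm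
  _ = _ := by rw [h]

end ListLemmas

lemma prod_ofFn_ite {M : Type*} [Monoid M] (a c : ℕ) (X Y : M) :
    (List.ofFn fun j : Fin (a+c) => if (j : ℕ) < a then X else Y).prod = X ^ a * Y ^ c := by
  rw [List.ofFn_add, List.prod_append]
  congr 1
  · rw [show (List.ofFn fun j : Fin a => if ((Fin.castLE (Nat.le_add_right a c) j : Fin (a+c)) : ℕ) < a then X else Y)
        = List.ofFn fun _ : Fin a => X from by
      apply congrArg; funext j; simp [Fin.is_lt]]
    simp [List.ofFn_const]
  · rw [show (List.ofFn fun j : Fin c => if ((Fin.natAdd a j : Fin (a+c)) : ℕ) < a then X else Y)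
        = List.ofFn fun _ : Fin c => Y from by
      apply congrArg; funext j; simp]
    simp [List.ofFn_const]

lemma prod_ofFn_kron {l : Type*} [Fintype l] [DecidableEq l] {m : Type*} [Fintype m] [DecidableEq m] :
    ∀ (N : ℕ) (A : Fin N → Matrix l l ℂ) (B : Fin N → Matrix m m ℂ),
    (List.ofFn fun j => A j ⊗ₖ B j).prod = (List.ofFn A).prod ⊗ₖ (List.ofFn B).prod := by
  intro N
  induction N with
  | zero => intro A B; simp [Matrix.one_kronecker_one]
  | succ N ih =>
      intro A B
      simp only [List.ofFn_succ, List.prod_cons]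
      rw [ih (fun j => A j.succ) (fun j => B j.succ), Matrix.mul_kronecker_mul]

lemma mconj_mul {m : Type*} [Fintype m] (A B : Matrix m m ℂ) :
    mconj (A * B) = mconj A * mconj B := by
  simp [mconj, Matrix.map_mul]

lemma mconj_one {m : Type*} [Fintype m] [DecidableEq m] : mconj (1 : Matrix m m ℂ) = 1 := by
  simp [mconj]

lemma trace_mconj {m : Type*} [Fintype m] (A : Matrix m m ℂ) :
    (mconj A).trace = (starRingEnd ℂ) A.trace := by
  simp [mconj, Matrix.trace, Matrix.map_apply]

lemma mconj_listprod {m : Type*} [Fintype m] [DecidableEq m] :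
    ∀ (N : ℕ) (A : Fin N → Matrix m m ℂ),
    (List.ofFn fun j => mconj (A j)).prod = mconj (List.ofFn A).prod := by
  intro N
  induction N with
  | zero => intro A; simp [mconj_one]
  | succ N ih =>
      intro A
      simp only [List.ofFn_succ, List.prod_cons]
      rw [ih (fun j => A j.succ), ← mconj_mul]

lemma prod_ofFn_pow {M : Type*} [Monoid M] :
    ∀ (N : ℕ) (X : M) (e : Fin N → ℕ),
    (List.ofFn fun j => X ^ (e j)).prod = X ^ (∑ j, e j) := by
  intro N
  induction N with
  | zero => intro X e; simp
  | succ N ih =>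
      intro X e
      simp only [List.ofFn_succ, List.prod_cons]
      rw [ih X (fun j => e j.succ), Fin.sum_univ_succ, pow_add]

/- ---------- pauli and sgn lemmas ---------- -/

lemma pauliX_sq : pauliX * pauliX = 1 := by
  ext a b
  cases a <;> cases b <;>
    simp [pauliX, Matrix.mul_apply, Fintype.sum_bool, Matrix.one_apply]

lemma trace_pauliX : (pauliX).trace = 0 := by
  simp [pauliX, Matrix.trace, Fintype.sum_bool, Matrix.diag]

lemma trace_one_bool : (1 : Matrix Bool Bool ℂ).trace = 2 := by
  simp [Matrix.trace_one]

lemma trace_pauliX_pow (e : ℕ) : (pauliX ^ e).trace = 1 + (-1 : ℂ) ^ e := by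
  rcases Nat.even_or_odd e with he | he
  · obtain ⟨k, hk⟩ := he
    have : pauliX ^ e = 1 := by
      rw [hk, ← two_mul, pow_mul, show pauliX ^ 2 = 1 from by rw [sq]; exact pauliX_sq, one_pow]
    rw [this, trace_one_bool, hk, ← two_mul, pow_mul, neg_one_sq, one_pow]
    norm_num
  · obtain ⟨k, hk⟩ := he
    have : pauliX ^ e = pauliX := by
      rw [hk, pow_add, pow_mul, show pauliX ^ 2 = 1 from by rw [sq]; exact pauliX_sq, one_pow,
        one_mul, pow_one]
    rw [this, trace_pauliX, hk, pow_add, pow_mul, neg_one_sq, one_pow, pow_one, one_mul]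
    norm_num

lemma neg_one_pow_mod_two (n : ℕ) : (-1 : ℂ) ^ (n % 2) = (-1 : ℂ) ^ n := by
  conv_rhs => rw [← Nat.div_add_mod n 2]
  rw [pow_add, pow_mul, neg_one_sq, one_pow, one_mul]

lemma sgn_mul_self (x : ZMod 2) : sgn x * sgn x = 1 := by
  rw [sgn, ← pow_add, ← two_mul, pow_mul, neg_one_sq, one_pow]

lemma sgn_add (x y : ZMod 2) : sgn (x + y) = sgn x * sgn y := by
  rw [sgn, sgn, sgn, ← pow_add]
  rw [show (x + y).val = (x.val + y.val) % 2 from by rw [ZMod.val_add]]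
  rw [neg_one_pow_mod_two]

lemma neg_one_pow_val_add (x y : ZMod 2) :
    (-1 : ℂ) ^ ((x + y).val) = sgn x * sgn y := sgn_add x y

lemma conj_sgn (x : ZMod 2) : (starRingEnd ℂ) (sgn x) = sgn x := by
  rw [sgn, map_pow, map_neg, _root_.map_one]

lemma sgn_zero : sgn (0 : ZMod 2) = 1 := by simp [sgn]

lemma sgn_one : sgn (1 : ZMod 2) = -1 := by
  rw [sgn, show (1 : ZMod 2).val = 1 from rfl, pow_one]

/- ---------- transfer word machinery ---------- -/

section Transfer

variable {d b : ℕ} (Nm : Fin d → Fin d → Matrix (Fin b) (Fin b) ℂ)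

def Sop (w : Fin d × Fin d → ℂ) : Matrix (Fin b × Fin b) (Fin b × Fin b) ℂ :=
  ∑ q : Fin d × Fin d, w q • (Nm q.1 q.2 ⊗ₖ mconj (Nm q.1 q.2))

lemma trace_word (N : ℕ) (w : Fin N → Fin d × Fin d → ℂ) :
    ((List.ofFn fun j => Sop Nm (w j)).prod).trace
      = ∑ n : Fin N → Fin d, ∑ m : Fin N → Fin d,
          (∏ j, w j (n j, m j)) *
            (((List.ofFn fun j => Nm (n j) (m j)).prod).trace *
              (starRingEnd ℂ) ((List.ofFn fun j => Nm (n j) (m j)).prod).trace) := by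
  have h1 : ((List.ofFn fun j => Sop Nm (w j)).prod).trace
      = ∑ g : Fin N → Fin d × Fin d, (∏ j, w j (g j)) *
          (((List.ofFn fun j => Nm (g j).1 (g j).2).prod).trace *
            (starRingEnd ℂ) ((List.ofFn fun j => Nm (g j).1 (g j).2).prod).trace) := by
    rw [show (fun j => Sop Nm (w j))
        = fun j => ∑ q : Fin d × Fin d, w j q • (Nm q.1 q.2 ⊗ₖ mconj (Nm q.1 q.2)) from rfl]
    rw [prod_ofFn_sum_smul]
    rw [Matrix.trace_sum]
    apply Finset.sum_congr rfl
    intro g _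
    rw [Matrix.trace_smul]
    rw [prod_ofFn_kron N (fun j => Nm (g j).1 (g j).2) (fun j => mconj (Nm (g j).1 (g j).2))]
    rw [Matrix.trace_kronecker]
    rw [mconj_listprod N (fun j => Nm (g j).1 (g j).2), trace_mconj]
    rw [smul_eq_mul]
  rw [h1]
  rw [← Equiv.sum_comp (Equiv.arrowProdEquivProdArrow (Fin N) (fun _ => Fin d) (fun _ => Fin d)).symm
      (fun g : Fin N → Fin d × Fin d => (∏ j, w j (g j)) *
          (((List.ofFn fun j => Nm (g j).1 (g j).2).prod).trace *
            (starRingEnd ℂ) ((List.ofFn fun j => Nm (g j).1 (g j).2).prod).trace))]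
  rw [Fintype.sum_prod_type]
  rfl

lemma Sop_ite (cond : Prop) [Decidable cond] (wa wb : Fin d × Fin d → ℂ) :
    Sop Nm (fun q => if cond then wa q else wb q) = if cond then Sop Nm wa else Sop Nm wb := by
  split_ifs <;> rfl

lemma trace_word_split (wa wb : Fin d × Fin d → ℂ) (a c : ℕ) :
    (((Sop Nm wa) ^ a * (Sop Nm wb) ^ c)).trace
      = ∑ n : Fin (a+c) → Fin d, ∑ m : Fin (a+c) → Fin d,
          (∏ j : Fin (a+c), (if (j : ℕ) < a then wa else wb) (n j, m j)) *
            (((List.ofFn fun j => Nm (n j) (m j)).prod).trace *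
              (starRingEnd ℂ) ((List.ofFn fun j => Nm (n j) (m j)).prod).trace) := by
  have h := trace_word Nm (a+c) (fun j => if (j : ℕ) < a then wa else wb)
  have h2 : (List.ofFn fun j : Fin (a+c) => Sop Nm (if (j : ℕ) < a then wa else wb)).prod
      = (Sop Nm wa) ^ a * (Sop Nm wb) ^ c := by
    rw [show (fun j : Fin (a+c) => Sop Nm (if (j : ℕ) < a then wa else wb))
        = fun j : Fin (a+c) => if (j : ℕ) < a then Sop Nm wa else Sop Nm wb from by
      funext j; split_ifs <;> rfl]
    exact prod_ofFn_ite a c _ _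
  rw [← h2]
  rw [show (fun j : Fin (a+c) => Sop Nm (w := if (j : ℕ) < a then wa else wb))
      = fun j : Fin (a+c) => Sop Nm (if (j : ℕ) < a then wa else wb) from rfl]
  rw [h]

end Transfer

/- ---------- entry and unitarity ---------- -/

section Entry

variable {d b : ℕ} (p : Fin d → ZMod 2)
  (U : Fin d → Fin d → Matrix (Bool × Fin b) (Bool × Fin b) ℂ)
  (Nm : Fin d → Fin d → Matrix (Fin b) (Fin b) ℂ)

lemma entry_eq (hNm : ∀ n m', U n m' = (pauliX ^ (p n + p m').val) ⊗ₖ Nm n m')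
    (N : ℕ) (n m : Fin N → Fin d) :
    fMPO p U N n m = sgn (mpoSign p n m) *
      ((1 + (-1:ℂ) ^ (∑ j, (p (n j) + p (m j)).val)) *
        ((List.ofFn fun j => Nm (n j) (m j)).prod).trace) := by
  show sgn (mpoSign p n m) * ((List.ofFn fun j => U (n j) (m j)).prod).trace = _
  congr 1
  rw [show (fun j => U (n j) (m j))
      = fun j => (pauliX ^ (p (n j) + p (m j)).val) ⊗ₖ Nm (n j) (m j) from by
    funext j; exact hNm (n j) (m j)]
  rw [prod_ofFn_kron N (fun j => pauliX ^ (p (n j) + p (m j)).val) (fun j => Nm (n j) (m j)),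
    prod_ofFn_pow, Matrix.trace_kronecker, trace_pauliX_pow]

lemma entry_mul_conj (hNm : ∀ n m', U n m' = (pauliX ^ (p n + p m').val) ⊗ₖ Nm n m')
    (N : ℕ) (n m : Fin N → Fin d) :
    fMPO p U N n m * (starRingEnd ℂ) (fMPO p U N n m)
      = (1 + ∏ j, (sgn (p (n j)) * sgn (p (m j)))) *
          (2 * (((List.ofFn fun j => Nm (n j) (m j)).prod).trace *
            (starRingEnd ℂ) ((List.ofFn fun j => Nm (n j) (m j)).prod).trace)) := by
  rw [entry_eq p U Nm hNm N n m]
  set T := ((List.ofFn fun j => Nm (n j) (m j)).prod).trace with hT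
  set e : ℂ := (-1:ℂ) ^ (∑ j, (p (n j) + p (m j)).val) with he
  have hconj : (starRingEnd ℂ) (sgn (mpoSign p n m) * ((1 + e) * T))
      = sgn (mpoSign p n m) * ((1 + (starRingEnd ℂ) e) * (starRingEnd ℂ) T) := by
    rw [_root_.map_mul, _root_.map_mul, conj_sgn, map_add, _root_.map_one]
  rw [hconj]
  have hce : (starRingEnd ℂ) e = e := by rw [he, map_pow, map_neg, _root_.map_one]
  rw [hce]
  have hee : e * e = 1 := by rw [he, ← pow_add, ← two_mul, pow_mul, neg_one_sq, one_pow]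
  have hprod : e = ∏ j, (sgn (p (n j)) * sgn (p (m j))) := by
    rw [he, ← Finset.prod_pow_eq_pow_sum]
    exact Finset.prod_congr rfl fun j _ => neg_one_pow_val_add _ _
  have hs : sgn (mpoSign p n m) * sgn (mpoSign p n m) = 1 := sgn_mul_self _
  calc sgn (mpoSign p n m) * ((1 + e) * T) *
        (sgn (mpoSign p n m) * ((1 + e) * (starRingEnd ℂ) T))
      = (sgn (mpoSign p n m) * sgn (mpoSign p n m)) *
          (((1 + e) * (1 + e)) * (T * (starRingEnd ℂ) T)) := by ring
    _ = (1 + e) * (2 * (T * (starRingEnd ℂ) T)) := by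
          rw [hs, one_mul, show (1 + e) * (1 + e) = 2 * (1 + e) from by linear_combination hee]
          ring
    _ = _ := by rw [hprod]

lemma colNorm
    (hunit : ∀ N : ℕ, 1 ≤ N →
      ((Real.sqrt 2 : ℂ))⁻¹ • fMPO p U N ∈ Matrix.unitaryGroup (Fin N → Fin d) ℂ)
    (N : ℕ) (hN : 1 ≤ N) (m : Fin N → Fin d) :
    ∑ n : Fin N → Fin d, fMPO p U N n m * (starRingEnd ℂ) (fMPO p U N n m) = 2 := by
  have h := (Matrix.mem_unitaryGroup_iff').mp (hunit N hN)
  have hc : (starRingEnd ℂ) ((Real.sqrt 2 : ℂ))⁻¹ * ((Real.sqrt 2 : ℂ))⁻¹ = 2⁻¹ := by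
    have h22 : ((Real.sqrt 2 : ℝ) : ℂ) * ((Real.sqrt 2 : ℝ) : ℂ) = 2 := by
      norm_cast
      exact Real.mul_self_sqrt (by norm_num)
    rw [map_inv₀, Complex.conj_ofReal, ← mul_inv, h22]
  have h2 : (fMPO p U N)ᴴ * fMPO p U N = (2 : ℂ) • (1 : Matrix (Fin N → Fin d) (Fin N → Fin d) ℂ) := by
    have hs : star (((Real.sqrt 2 : ℂ))⁻¹ • fMPO p U N) * (((Real.sqrt 2 : ℂ))⁻¹ • fMPO p U N)
        = ((starRingEnd ℂ) ((Real.sqrt 2 : ℂ))⁻¹ * ((Real.sqrt 2 : ℂ))⁻¹) •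
            ((fMPO p U N)ᴴ * fMPO p U N) := by
      rw [star_smul, Matrix.smul_mul, Matrix.mul_smul, smul_smul]
      rfl
    rw [hs, hc] at h
    calc (fMPO p U N)ᴴ * fMPO p U N
        = (2 : ℂ) • ((2⁻¹ : ℂ) • ((fMPO p U N)ᴴ * fMPO p U N)) := by
          rw [smul_smul]; norm_num
      _ = (2 : ℂ) • (1 : Matrix (Fin N → Fin d) (Fin N → Fin d) ℂ) := by rw [h]
  have h3 : ((fMPO p U N)ᴴ * fMPO p U N) m m
      = ((2 : ℂ) • (1 : Matrix (Fin N → Fin d) (Fin N → Fin d) ℂ)) m m := by rw [h2]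
  simp only [Matrix.mul_apply, Matrix.conjTranspose_apply, Matrix.smul_apply,
    Matrix.one_apply_eq, smul_eq_mul, mul_one] at h3
  rw [← h3]
  apply Finset.sum_congr rfl
  intro n _
  rw [mul_comm]
  rfl

lemma rowNorm
    (hunit : ∀ N : ℕ, 1 ≤ N →
      ((Real.sqrt 2 : ℂ))⁻¹ • fMPO p U N ∈ Matrix.unitaryGroup (Fin N → Fin d) ℂ)
    (N : ℕ) (hN : 1 ≤ N) (n : Fin N → Fin d) :
    ∑ m : Fin N → Fin d, fMPO p U N n m * (starRingEnd ℂ) (fMPO p U N n m) = 2 := by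
  have h := (Matrix.mem_unitaryGroup_iff).mp (hunit N hN)
  have hc : ((Real.sqrt 2 : ℂ))⁻¹ * (starRingEnd ℂ) ((Real.sqrt 2 : ℂ))⁻¹ = 2⁻¹ := by
    have h22 : ((Real.sqrt 2 : ℝ) : ℂ) * ((Real.sqrt 2 : ℝ) : ℂ) = 2 := by
      norm_cast
      exact Real.mul_self_sqrt (by norm_num)
    rw [map_inv₀, Complex.conj_ofReal, ← mul_inv, h22]
  have h2 : fMPO p U N * (fMPO p U N)ᴴ = (2 : ℂ) • (1 : Matrix (Fin N → Fin d) (Fin N → Fin d) ℂ) := by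
    have hs : (((Real.sqrt 2 : ℂ))⁻¹ • fMPO p U N) * star (((Real.sqrt 2 : ℂ))⁻¹ • fMPO p U N)
        = (((Real.sqrt 2 : ℂ))⁻¹ * (starRingEnd ℂ) ((Real.sqrt 2 : ℂ))⁻¹) •
            (fMPO p U N * (fMPO p U N)ᴴ) := by
      rw [star_smul, Matrix.smul_mul, Matrix.mul_smul, smul_smul]
      rfl
    rw [hs, hc] at h
    calc fMPO p U N * (fMPO p U N)ᴴ
        = (2 : ℂ) • ((2⁻¹ : ℂ) • (fMPO p U N * (fMPO p U N)ᴴ)) := by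
          rw [smul_smul]; norm_num
      _ = (2 : ℂ) • (1 : Matrix (Fin N → Fin d) (Fin N → Fin d) ℂ) := by rw [h]
  have h3 : (fMPO p U N * (fMPO p U N)ᴴ) n n
      = ((2 : ℂ) • (1 : Matrix (Fin N → Fin d) (Fin N → Fin d) ℂ)) n n := by rw [h2]
  simp only [Matrix.mul_apply, Matrix.conjTranspose_apply, Matrix.smul_apply,
    Matrix.one_apply_eq, smul_eq_mul, mul_one] at h3
  rw [← h3]
  rfl

end Entry

section Master

variable {d b : ℕ} (p : Fin d → ZMod 2)
  (U : Fin d → Fin d → Matrix (Bool × Fin b) (Bool × Fin b) ℂ)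
  (Nm : Fin d → Fin d → Matrix (Fin b) (Fin b) ℂ)

lemma master_m (hNm : ∀ n m', U n m' = (pauliX ^ (p n + p m').val) ⊗ₖ Nm n m')
    (hunit : ∀ N : ℕ, 1 ≤ N →
      ((Real.sqrt 2 : ℂ))⁻¹ • fMPO p U N ∈ Matrix.unitaryGroup (Fin N → Fin d) ℂ)
    (a c : ℕ) (h1 : 1 ≤ a + c) :
    ((Sop Nm (fun q => sgn (p q.2))) ^ a * (Sop Nm (fun _ => 1)) ^ c).trace
      + ((Sop Nm (fun q => sgn (p q.1))) ^ a
          * (Sop Nm (fun q => sgn (p q.1) * sgn (p q.2))) ^ c).trace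
      = (∑ μ : Fin d, sgn (p μ)) ^ a * (d : ℂ) ^ c := by
  set N := a + c with hNdef
  set w : Fin N → Fin d → ℂ := fun j μ => if (j : ℕ) < a then sgn (p μ) else 1 with hw
  set E : (Fin N → Fin d) → (Fin N → Fin d) → ℂ := fun n m => fMPO p U N n m with hE
  set LHSsum := ∑ m : Fin N → Fin d, (∏ j, w j (m j)) *
      (∑ n : Fin N → Fin d, E n m * (starRingEnd ℂ) (E n m)) with hL
  have ev1 : LHSsum = ((∑ μ : Fin d, sgn (p μ)) ^ a * (d : ℂ) ^ c) * 2 := by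
    rw [hL]
    have hcol : ∀ m : Fin N → Fin d,
        (∑ n : Fin N → Fin d, E n m * (starRingEnd ℂ) (E n m)) = 2 := fun m =>
      colNorm p U hunit N h1 m
    rw [Finset.sum_congr rfl (fun m _ => by rw [hcol m])]
    rw [← Finset.sum_mul]
    congr 1
    rw [← prod_ofFn_scalar]
    have hj : ∀ j : Fin N, (∑ μ : Fin d, w j μ)
        = if (j : ℕ) < a then (∑ μ : Fin d, sgn (p μ)) else (d : ℂ) := by
      intro j
      by_cases hja : (j : ℕ) < a
      · simp [hw, hja]
      · simp [hw, hja]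
    rw [Finset.prod_congr rfl (fun j _ => hj j)]
    rw [← List.prod_ofFn, prod_ofFn_ite]
  have ev2 : LHSsum =
      (((Sop Nm (fun q => sgn (p q.2))) ^ a * (Sop Nm (fun _ => 1)) ^ c).trace
        + ((Sop Nm (fun q => sgn (p q.1))) ^ a
            * (Sop Nm (fun q => sgn (p q.1) * sgn (p q.2))) ^ c).trace) * 2 := by
    rw [hL]
    have step1 : LHSsum = ∑ n : Fin N → Fin d, ∑ m : Fin N → Fin d,
        (∏ j, w j (m j)) * (E n m * (starRingEnd ℂ) (E n m)) := by
      rw [hL, Finset.sum_comm]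
      exact Finset.sum_congr rfl fun m _ => by rw [Finset.mul_sum]
    rw [← hL, step1]
    have step2 : ∀ (n m : Fin N → Fin d),
        (∏ j, w j (m j)) * (E n m * (starRingEnd ℂ) (E n m))
          = ((∏ j : Fin N, (if (j : ℕ) < a then (fun q : Fin d × Fin d => sgn (p q.2))
                else (fun _ : Fin d × Fin d => (1:ℂ))) (n j, m j)) *
              (((List.ofFn fun j => Nm (n j) (m j)).prod).trace *
                (starRingEnd ℂ) ((List.ofFn fun j => Nm (n j) (m j)).prod).trace)) * 2
            + ((∏ j : Fin N, (if (j : ℕ) < a then (fun q : Fin d × Fin d =>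
                  sgn (p q.2) * (sgn (p q.1) * sgn (p q.2)))
                else (fun q : Fin d × Fin d => sgn (p q.1) * sgn (p q.2))) (n j, m j)) *
              (((List.ofFn fun j => Nm (n j) (m j)).prod).trace *
                (starRingEnd ℂ) ((List.ofFn fun j => Nm (n j) (m j)).prod).trace)) * 2 := by
      intro n m
      rw [hE, entry_mul_conj p U Nm hNm N n m]
      have e1 : ∏ j : Fin N, (if (j : ℕ) < a then (fun q : Fin d × Fin d => sgn (p q.2))
            else (fun _ : Fin d × Fin d => (1:ℂ))) (n j, m j) = ∏ j, w j (m j) := by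
        refine Finset.prod_congr rfl fun j _ => ?_
        by_cases hja : (j : ℕ) < a <;> simp [hw, hja]
      have e2 : ∏ j : Fin N, (if (j : ℕ) < a then (fun q : Fin d × Fin d =>
              sgn (p q.2) * (sgn (p q.1) * sgn (p q.2)))
            else (fun q : Fin d × Fin d => sgn (p q.1) * sgn (p q.2))) (n j, m j)
          = (∏ j, w j (m j)) * ∏ j, (sgn (p (n j)) * sgn (p (m j))) := by
        rw [← Finset.prod_mul_distrib]
        refine Finset.prod_congr rfl fun j _ => ?_
        by_cases hja : (j : ℕ) < a <;> simp [hw, hja] <;> ring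
      rw [e1, e2]
      ring
    rw [Finset.sum_congr rfl (fun n _ => Finset.sum_congr rfl (fun m _ => step2 n m))]
    have hfun : (fun q : Fin d × Fin d => sgn (p q.2) * (sgn (p q.1) * sgn (p q.2)))
        = (fun q : Fin d × Fin d => sgn (p q.1)) := by
      funext q
      rw [show sgn (p q.2) * (sgn (p q.1) * sgn (p q.2))
          = sgn (p q.1) * (sgn (p q.2) * sgn (p q.2)) from by ring, sgn_mul_self, mul_one]
    have hSop : Sop Nm (fun q : Fin d × Fin d => sgn (p q.2) * (sgn (p q.1) * sgn (p q.2)))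
        = Sop Nm (fun q : Fin d × Fin d => sgn (p q.1)) := by rw [hfun]
    rw [← hSop]
    rw [trace_word_split Nm (fun q : Fin d × Fin d => sgn (p q.2)) (fun _ => 1) a c]
    rw [trace_word_split Nm (fun q : Fin d × Fin d => sgn (p q.2) * (sgn (p q.1) * sgn (p q.2)))
        (fun q : Fin d × Fin d => sgn (p q.1) * sgn (p q.2)) a c]
    simp only [Finset.sum_add_distrib, ← Finset.sum_mul]
    ring
  have := ev1.symm.trans ev2
  exact (mul_right_cancel₀ (by norm_num : (2:ℂ) ≠ 0) this).symm

lemma master_n (hNm : ∀ n m', U n m' = (pauliX ^ (p n + p m').val) ⊗ₖ Nm n m')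
    (hunit : ∀ N : ℕ, 1 ≤ N →
      ((Real.sqrt 2 : ℂ))⁻¹ • fMPO p U N ∈ Matrix.unitaryGroup (Fin N → Fin d) ℂ)
    (a c : ℕ) (h1 : 1 ≤ a + c) :
    ((Sop Nm (fun q => sgn (p q.1))) ^ a * (Sop Nm (fun _ => 1)) ^ c).trace
      + ((Sop Nm (fun q => sgn (p q.2))) ^ a
          * (Sop Nm (fun q => sgn (p q.1) * sgn (p q.2))) ^ c).trace
      = (∑ μ : Fin d, sgn (p μ)) ^ a * (d : ℂ) ^ c := by
  set N := a + c with hNdef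
  set w : Fin N → Fin d → ℂ := fun j μ => if (j : ℕ) < a then sgn (p μ) else 1 with hw
  set E : (Fin N → Fin d) → (Fin N → Fin d) → ℂ := fun n m => fMPO p U N n m with hE
  set LHSsum := ∑ n : Fin N → Fin d, (∏ j, w j (n j)) *
      (∑ m : Fin N → Fin d, E n m * (starRingEnd ℂ) (E n m)) with hL
  have ev1 : LHSsum = ((∑ μ : Fin d, sgn (p μ)) ^ a * (d : ℂ) ^ c) * 2 := by
    rw [hL]
    have hrow : ∀ n : Fin N → Fin d,
        (∑ m : Fin N → Fin d, E n m * (starRingEnd ℂ) (E n m)) = 2 := fun n =>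
      rowNorm p U hunit N h1 n
    rw [Finset.sum_congr rfl (fun n _ => by rw [hrow n])]
    rw [← Finset.sum_mul]
    congr 1
    rw [← prod_ofFn_scalar]
    have hj : ∀ j : Fin N, (∑ μ : Fin d, w j μ)
        = if (j : ℕ) < a then (∑ μ : Fin d, sgn (p μ)) else (d : ℂ) := by
      intro j
      by_cases hja : (j : ℕ) < a
      · simp [hw, hja]
      · simp [hw, hja]
    rw [Finset.prod_congr rfl (fun j _ => hj j)]
    rw [← List.prod_ofFn, prod_ofFn_ite]
  have ev2 : LHSsum =
      (((Sop Nm (fun q => sgn (p q.1))) ^ a * (Sop Nm (fun _ => 1)) ^ c).trace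
        + ((Sop Nm (fun q => sgn (p q.2))) ^ a
            * (Sop Nm (fun q => sgn (p q.1) * sgn (p q.2))) ^ c).trace) * 2 := by
    rw [hL]
    have step1 : LHSsum = ∑ n : Fin N → Fin d, ∑ m : Fin N → Fin d,
        (∏ j, w j (n j)) * (E n m * (starRingEnd ℂ) (E n m)) := by
      rw [hL]
      exact Finset.sum_congr rfl fun n _ => by rw [Finset.mul_sum]
    rw [← hL, step1]
    have step2 : ∀ (n m : Fin N → Fin d),
        (∏ j, w j (n j)) * (E n m * (starRingEnd ℂ) (E n m))
          = ((∏ j : Fin N, (if (j : ℕ) < a then (fun q : Fin d × Fin d => sgn (p q.1))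
                else (fun _ : Fin d × Fin d => (1:ℂ))) (n j, m j)) *
              (((List.ofFn fun j => Nm (n j) (m j)).prod).trace *
                (starRingEnd ℂ) ((List.ofFn fun j => Nm (n j) (m j)).prod).trace)) * 2
            + ((∏ j : Fin N, (if (j : ℕ) < a then (fun q : Fin d × Fin d =>
                  sgn (p q.1) * (sgn (p q.1) * sgn (p q.2)))
                else (fun q : Fin d × Fin d => sgn (p q.1) * sgn (p q.2))) (n j, m j)) *
              (((List.ofFn fun j => Nm (n j) (m j)).prod).trace *
                (starRingEnd ℂ) ((List.ofFn fun j => Nm (n j) (m j)).prod).trace)) * 2 := by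
      intro n m
      rw [hE, entry_mul_conj p U Nm hNm N n m]
      have e1 : ∏ j : Fin N, (if (j : ℕ) < a then (fun q : Fin d × Fin d => sgn (p q.1))
            else (fun _ : Fin d × Fin d => (1:ℂ))) (n j, m j) = ∏ j, w j (n j) := by
        refine Finset.prod_congr rfl fun j _ => ?_
        by_cases hja : (j : ℕ) < a <;> simp [hw, hja]
      have e2 : ∏ j : Fin N, (if (j : ℕ) < a then (fun q : Fin d × Fin d =>
              sgn (p q.1) * (sgn (p q.1) * sgn (p q.2)))
            else (fun q : Fin d × Fin d => sgn (p q.1) * sgn (p q.2))) (n j, m j)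
          = (∏ j, w j (n j)) * ∏ j, (sgn (p (n j)) * sgn (p (m j))) := by
        rw [← Finset.prod_mul_distrib]
        refine Finset.prod_congr rfl fun j _ => ?_
        by_cases hja : (j : ℕ) < a <;> simp [hw, hja] <;> ring
      rw [e1, e2]
      ring
    rw [Finset.sum_congr rfl (fun n _ => Finset.sum_congr rfl (fun m _ => step2 n m))]
    have hfun : (fun q : Fin d × Fin d => sgn (p q.1) * (sgn (p q.1) * sgn (p q.2)))
        = (fun q : Fin d × Fin d => sgn (p q.2)) := by
      funext q
      rw [show sgn (p q.1) * (sgn (p q.1) * sgn (p q.2))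
          = sgn (p q.2) * (sgn (p q.1) * sgn (p q.1)) from by ring, sgn_mul_self, mul_one]
    have hSop : Sop Nm (fun q : Fin d × Fin d => sgn (p q.1) * (sgn (p q.1) * sgn (p q.2)))
        = Sop Nm (fun q : Fin d × Fin d => sgn (p q.2)) := by rw [hfun]
    rw [← hSop]
    rw [trace_word_split Nm (fun q : Fin d × Fin d => sgn (p q.1)) (fun _ => 1) a c]
    rw [trace_word_split Nm (fun q : Fin d × Fin d => sgn (p q.1) * (sgn (p q.1) * sgn (p q.2)))
        (fun q : Fin d × Fin d => sgn (p q.1) * sgn (p q.2)) a c]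
    simp only [Finset.sum_add_distrib, ← Finset.sum_mul]
    ring
  have := ev1.symm.trans ev2
  exact (mul_right_cancel₀ (by norm_num : (2:ℂ) ≠ 0) this).symm

end Master


/- ---------- eigenvalue machinery ---------- -/

section Eigen

open Polynomial

variable {I : Type*} [Fintype I] [DecidableEq I]

lemma eval_charpoly' (A : Matrix I I ℂ) (x : ℂ) :
    (Matrix.charpoly A).eval x = (x • (1 : Matrix I I ℂ) - A).det := by
  rw [Matrix.charpoly, ← Polynomial.coe_evalRingHom, RingHom.map_det]
  congr 1
  ext i j
  by_cases hij : i = j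
  · subst hij
    simp [Matrix.charmatrix_apply_eq, Matrix.map_apply, Matrix.smul_apply, Matrix.one_apply]
  · simp [Matrix.charmatrix_apply_ne _ _ _ hij, Matrix.map_apply, Matrix.smul_apply,
      Matrix.one_apply, hij]

lemma det_aeval_prod (M : Matrix I I ℂ) {β : Type*} (s : Finset β) (f : β → Polynomial ℂ) :
    ((Polynomial.aeval M) (∏ i ∈ s, f i)).det = ∏ i ∈ s, ((Polynomial.aeval M) (f i)).det := by
  classical
  induction s using Finset.induction_on with
  | empty => simp
  | insert _ _ hx ih =>
      rename_i a s2
      rw [Finset.prod_insert hx, _root_.map_mul, Matrix.det_mul, ih, Finset.prod_insert hx]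

lemma aeval_X_sub_C (M : Matrix I I ℂ) (c : ℂ) :
    (Polynomial.aeval M) (X - C c) = M - c • (1 : Matrix I I ℂ) := by
  rw [map_sub, aeval_X, aeval_C, Algebra.algebraMap_eq_smul_one]

lemma prod_multiset_swap {α β : Type*} (s : Finset β) (R : Multiset α) (g : β → α → ℂ) :
    ∏ i ∈ s, (R.map (g i)).prod = (R.map (fun μ => ∏ i ∈ s, g i μ)).prod := by
  classical
  induction R using Multiset.induction with
  | empty => simp
  | cons a t ih =>
      simp only [Multiset.map_cons, Multiset.prod_cons, ← ih, Finset.prod_mul_distrib]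

lemma prod_map_const_mul (R : Multiset ℂ) (c : ℂ) (f : ℂ → ℂ) :
    (R.map (fun μ => c * f μ)).prod = c ^ (Multiset.card R) * (R.map f).prod := by
  classical
  induction R using Multiset.induction with
  | empty => simp
  | cons a t ih =>
      simp only [Multiset.map_cons, Multiset.prod_cons, ih, Multiset.card_cons]
      ring

lemma trace_pow_eq_sum_pow_roots (M : Matrix I I ℂ) (N : ℕ) (hN : 1 ≤ N) :
    (M ^ N).trace = ((Matrix.charpoly M).roots.map (· ^ N)).sum := by
  classical
  set K := Fintype.card I with hK
  set R := (Matrix.charpoly M).roots with hR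
  have hsplit : (Matrix.charpoly M).Splits := IsAlgClosed.splits _
  have hfac : Matrix.charpoly M = (R.map fun a => X - C a).prod :=
    hsplit.eq_prod_roots_of_monic (Matrix.charpoly_monic M)
  have hNpos : 0 < N := hN
  obtain ⟨ζ, hζ⟩ : ∃ ζ : ℂ, IsPrimitiveRoot ζ N := ⟨_, Complex.isPrimitiveRoot_exp N hNpos.ne'⟩
  -- key: charpoly of M^N equals the prod over μ^N
  have key : Matrix.charpoly (M ^ N) = ((R.map (· ^ N)).map fun a => X - C a).prod := by
    apply Polynomial.funext
    intro x
    obtain ⟨y, hy⟩ : ∃ y : ℂ, y ^ N = x := IsAlgClosed.exists_pow_nat_eq x hNpos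
    have hpoly : (X ^ N - C x : Polynomial ℂ)
        = ∏ i ∈ Finset.range N, (X - C (ζ ^ i * y)) := X_pow_sub_C_eq_prod hζ hNpos hy
    have hmat : ((Polynomial.aeval M) (X ^ N - C x : Polynomial ℂ)).det
        = ∏ i ∈ Finset.range N, (M - (ζ ^ i * y) • (1 : Matrix I I ℂ)).det := by
      rw [hpoly, det_aeval_prod]
      exact Finset.prod_congr rfl fun i _ => by rw [aeval_X_sub_C]
    have hmat2 : ((Polynomial.aeval M) (X ^ N - C x : Polynomial ℂ))
        = M ^ N - x • (1 : Matrix I I ℂ) := by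
      rw [map_sub, map_pow, aeval_X, aeval_C, Algebra.algebraMap_eq_smul_one]
    have hdetc : ∀ c : ℂ, (M - c • (1 : Matrix I I ℂ)).det
        = (-1 : ℂ) ^ K * (R.map (fun μ => c - μ)).prod := by
      intro c
      have h1 : M - c • (1 : Matrix I I ℂ) = -(c • (1 : Matrix I I ℂ) - M) := (neg_sub _ _).symm
      have h2 : (c • (1 : Matrix I I ℂ) - M).det = (R.map (fun μ => c - μ)).prod := by
        rw [← eval_charpoly', hfac, Polynomial.eval_multiset_prod, Multiset.map_map]
        congr 1
        apply Multiset.map_congr rfl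
        intro μ _
        simp
      rw [h1, Matrix.det_neg, h2, hK]
    have hinner : ∀ μ : ℂ, ∏ i ∈ Finset.range N, (ζ ^ i * y - μ)
        = (-1 : ℂ) ^ N * (μ ^ N - x) := by
      intro μ
      have e1 : ∏ i ∈ Finset.range N, (μ - ζ ^ i * y) = μ ^ N - x := by
        have h' := congrArg (Polynomial.eval μ) hpoly
        rw [Polynomial.eval_sub, Polynomial.eval_pow, Polynomial.eval_X, Polynomial.eval_C,
          Polynomial.eval_prod] at h'
        rw [Finset.prod_congr rfl (fun i (_ : i ∈ Finset.range N) => by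
          rw [Polynomial.eval_sub, Polynomial.eval_X, Polynomial.eval_C])] at h'
        exact h'.symm
      calc ∏ i ∈ Finset.range N, (ζ ^ i * y - μ)
          = ∏ i ∈ Finset.range N, (-1 : ℂ) * (μ - ζ ^ i * y) := by
            exact Finset.prod_congr rfl fun i _ => by ring
        _ = (-1 : ℂ) ^ N * (μ ^ N - x) := by
            rw [Finset.prod_mul_distrib, Finset.prod_const, e1, Finset.card_range]
    have hcardR : Multiset.card R = K := by
      rw [hR, hK, ← Matrix.charpoly_natDegree_eq_dim M]
      exact splits_iff_card_roots.mp hsplit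
    have lhs1 : (Matrix.charpoly (M ^ N)).eval x = (x • (1 : Matrix I I ℂ) - M ^ N).det :=
      eval_charpoly' _ x
    have lhs2 : (x • (1 : Matrix I I ℂ) - M ^ N).det
        = (-1 : ℂ) ^ K * (M ^ N - x • (1 : Matrix I I ℂ)).det := by
      rw [show x • (1 : Matrix I I ℂ) - M ^ N = -(M ^ N - x • (1 : Matrix I I ℂ)) from
        (neg_sub _ _).symm, Matrix.det_neg, hK]
    have main : (M ^ N - x • (1 : Matrix I I ℂ)).det
        = (-1 : ℂ) ^ K * (R.map (fun μ => x - μ ^ N)).prod := by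
      rw [← hmat2, hmat]
      rw [Finset.prod_congr rfl fun i (_ : i ∈ Finset.range N) => hdetc (ζ ^ i * y)]
      rw [Finset.prod_mul_distrib, Finset.prod_const, Finset.card_range]
      rw [prod_multiset_swap]
      rw [show (fun μ => ∏ i ∈ Finset.range N, (ζ ^ i * y - μ))
          = fun μ => (-1 : ℂ) ^ N * (μ ^ N - x) from by funext μ; exact hinner μ]
      rw [prod_map_const_mul R ((-1 : ℂ) ^ N) (fun μ => μ ^ N - x)]
      rw [show (fun μ => μ ^ N - x) = fun μ => (-1 : ℂ) * (x - μ ^ N) from by funext μ; ring]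
      rw [prod_map_const_mul R (-1 : ℂ) (fun μ => x - μ ^ N)]
      rw [hcardR]
      set P := (Multiset.map (fun μ => x - μ ^ N) R).prod with hP
      rw [show (((-1:ℂ)) ^ K) ^ N * (((-1:ℂ) ^ N) ^ K * ((-1:ℂ) ^ K * P))
          = ((((-1:ℂ)) ^ K) ^ N * ((-1:ℂ) ^ N) ^ K) * ((-1:ℂ) ^ K * P) from by ring,
        ← pow_mul, ← pow_mul, ← pow_add, show K * N + N * K = 2 * (K * N) from by ring,
        pow_mul, neg_one_sq, one_pow, one_mul]
    have rhs1 : (((R.map (· ^ N)).map fun a => X - C a).prod).eval x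
        = (R.map (fun μ => x - μ ^ N)).prod := by
      rw [Polynomial.eval_multiset_prod, Multiset.map_map, Multiset.map_map]
      congr 1
      apply Multiset.map_congr rfl
      intro μ _
      simp
    rw [lhs1, lhs2, main, rhs1, ← mul_assoc, ← pow_add, ← two_mul, pow_mul, neg_one_sq,
      one_pow, one_mul]
  rw [Matrix.trace_eq_sum_roots_charpoly (M ^ N), key, roots_multiset_prod_X_sub_C]

lemma pow_card_eq_zero_of_roots_zero (M : Matrix I I ℂ)
    (h : ∀ x ∈ (Matrix.charpoly M).roots, x = 0) :
    M ^ (Fintype.card I) = 0 := by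
  classical
  have hsplit : (Matrix.charpoly M).Splits := IsAlgClosed.splits _
  have hfac : Matrix.charpoly M = ((Matrix.charpoly M).roots.map fun a => X - C a).prod :=
    hsplit.eq_prod_roots_of_monic (Matrix.charpoly_monic M)
  have hcard : Multiset.card (Matrix.charpoly M).roots = Fintype.card I := by
    rw [← Matrix.charpoly_natDegree_eq_dim M]
    exact splits_iff_card_roots.mp hsplit
  have hXpow : Matrix.charpoly M = X ^ (Fintype.card I) := by
    rw [hfac]
    rw [Multiset.map_congr rfl (fun x hx => by rw [h x hx, map_zero, sub_zero] :
      ∀ x ∈ (Matrix.charpoly M).roots, X - C x = X)]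
    rw [Multiset.map_const', Multiset.prod_replicate, hcard]
  have := Matrix.aeval_self_charpoly M
  rw [hXpow, map_pow, aeval_X] at this
  exact this

end Eigen

/- ---------- power sum classification ---------- -/

section Classify

open Polynomial

variable {I : Type*} [Fintype I] [DecidableEq I]

lemma multiset_power_sums_classify (R : Multiset ℂ) (t : ℂ) (ht : t ≠ 0)
    (h : ∀ N : ℕ, 1 ≤ N → (R.map (· ^ N)).sum = t ^ N) :
    (∀ x ∈ R, x = 0 ∨ x = t) ∧ R.count t = 1 := by
  classical
  set D : Finset ℂ := insert t (R.toFinset.filter (fun x => x ≠ 0)) with hD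
  have htD : t ∈ D := Finset.mem_insert_self _ _
  have hDne : ∀ v ∈ D, v ≠ 0 := by
    intro v hv
    rcases Finset.mem_insert.mp hv with h1 | h1
    · rw [h1]; exact ht
    · exact (Finset.mem_filter.mp h1).2
  set g : ℂ → ℂ := fun v => (R.count v : ℂ) - (if v = t then 1 else 0) with hg
  have hsys : ∀ N : ℕ, 1 ≤ N → ∑ v ∈ D, g v * v ^ N = 0 := by
    intro N hN
    have hNne : N ≠ 0 := by omega
    have e1 : ∑ v ∈ D, (R.count v : ℂ) * v ^ N = (R.map (· ^ N)).sum := by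
      have e1a : (R.map (· ^ N)).sum = ∑ v ∈ R.toFinset, (R.count v : ℂ) * v ^ N := by
        rw [Finset.sum_multiset_map_count]
        exact Finset.sum_congr rfl fun v _ => by rw [nsmul_eq_mul]
      have e1b : ∑ v ∈ D, (R.count v : ℂ) * v ^ N
          = ∑ v ∈ D ∪ R.toFinset, (R.count v : ℂ) * v ^ N := by
        apply Finset.sum_subset Finset.subset_union_left
        intro x hx hxD
        rcases Finset.mem_union.mp hx with h1 | h1
        · exact absurd h1 hxD
        · have hx0 : x = 0 := by
            by_contra hx0
            exact hxD (Finset.mem_insert_of_mem (Finset.mem_filter.mpr ⟨h1, hx0⟩))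
          rw [hx0, zero_pow hNne, mul_zero]
      have e1c : ∑ v ∈ R.toFinset, (R.count v : ℂ) * v ^ N
          = ∑ v ∈ D ∪ R.toFinset, (R.count v : ℂ) * v ^ N := by
        apply Finset.sum_subset Finset.subset_union_right
        intro x _ hxT
        have : R.count x = 0 := by
          rw [Multiset.count_eq_zero]
          exact fun hmem => hxT (Multiset.mem_toFinset.mpr hmem)
        rw [this, Nat.cast_zero, zero_mul]
      rw [e1b, ← e1c, e1a]
    have e2 : ∑ v ∈ D, (if v = t then (1:ℂ) else 0) * v ^ N = t ^ N := by
      rw [Finset.sum_congr rfl (fun v (_ : v ∈ D) => by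
        rw [show (if v = t then (1:ℂ) else 0) * v ^ N = if v = t then v ^ N else 0 from by
          split_ifs <;> ring])]
      rw [Finset.sum_ite_eq' D t (fun v => v ^ N), if_pos htD]
    have : ∑ v ∈ D, g v * v ^ N
        = (∑ v ∈ D, (R.count v : ℂ) * v ^ N) - ∑ v ∈ D, (if v = t then (1:ℂ) else 0) * v ^ N := by
      rw [← Finset.sum_sub_distrib]
      exact Finset.sum_congr rfl fun v _ => by rw [hg]; ring
    rw [this, e1, e2, h N hN, sub_self]
  -- Vandermonde argument
  set r := D.card with hr
  set eD := D.equivFin with heD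
  set v : Fin r → ℂ := fun i => ((eD.symm i : {x // x ∈ D}) : ℂ) with hv
  have hvD : ∀ i, v i ∈ D := fun i => (eD.symm i).2
  have hvinj : Function.Injective v := by
    intro i j hij
    have := Subtype.coe_injective hij
    exact eD.symm.injective this
  set A : Matrix (Fin r) (Fin r) ℂ := Matrix.of (fun i j : Fin r => v j ^ ((i:ℕ)+1)) with hA
  have hmv : A.mulVec (fun j => g (v j)) = 0 := by
    funext i
    have hstep : A.mulVec (fun j => g (v j)) i = ∑ j : Fin r, v j ^ ((i:ℕ)+1) * g (v j) := by
      simp [Matrix.mulVec, dotProduct, hA]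
    rw [hstep]
    have hre : ∑ j : Fin r, v j ^ ((i:ℕ)+1) * g (v j)
        = ∑ x ∈ D, x ^ ((i:ℕ)+1) * g x := by
      rw [← Finset.sum_coe_sort D (fun x => x ^ ((i:ℕ)+1) * g x)]
      exact (Equiv.sum_comp eD.symm
        (fun x : {x // x ∈ D} => (x : ℂ) ^ ((i:ℕ)+1) * g x)).symm ▸ rfl
    rw [hre]
    rw [Finset.sum_congr rfl (fun x (_ : x ∈ D) => mul_comm (x ^ ((i:ℕ)+1)) (g x))]
    exact hsys ((i:ℕ)+1) (by omega)
  have hdet : A.det ≠ 0 := by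
    have hAeq : A = (Matrix.vandermonde v)ᵀ * Matrix.diagonal v := by
      ext i j
      rw [Matrix.mul_diagonal, Matrix.transpose_apply, Matrix.vandermonde_apply, hA]
      rw [Matrix.of_apply, pow_succ]
    rw [hAeq, Matrix.det_mul, Matrix.det_transpose, Matrix.det_vandermonde,
      Matrix.det_diagonal]
    apply mul_ne_zero
    · rw [Finset.prod_ne_zero_iff]
      intro i _
      rw [Finset.prod_ne_zero_iff]
      intro j hj
      have hij : i ≠ j := ne_of_lt (Finset.mem_Ioi.mp hj)
      exact sub_ne_zero.mpr (fun hc => hij (hvinj hc.symm))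
    · rw [Finset.prod_ne_zero_iff]
      intro i _
      exact hDne _ (hvD i)
  have hgv : ∀ j : Fin r, g (v j) = 0 := by
    have h1 : (A⁻¹).mulVec (A.mulVec (fun j => g (v j))) = 0 := by
      rw [hmv, Matrix.mulVec_zero]
    rw [Matrix.mulVec_mulVec, Matrix.nonsing_inv_mul A (Ne.isUnit hdet),
      Matrix.one_mulVec] at h1
    intro j
    exact congrFun h1 j
  have hgD : ∀ w ∈ D, g w = 0 := by
    intro w hw
    have := hgv (eD ⟨w, hw⟩)
    have h2 : v (eD ⟨w, hw⟩) = w := by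
      rw [hv]
      simp
    rwa [h2] at this
  have hcount : R.count t = 1 := by
    have := hgD t htD
    have h1 : (R.count t : ℂ) - 1 = 0 := by simpa [hg] using this
    have h2 : (R.count t : ℂ) = 1 := by linear_combination h1
    exact_mod_cast h2
  refine ⟨?_, hcount⟩
  intro x hx
  by_cases hx0 : x = 0
  · left; exact hx0
  · right
    by_contra hxt
    have hxD : x ∈ D :=
      Finset.mem_insert_of_mem (Finset.mem_filter.mpr ⟨Multiset.mem_toFinset.mpr hx, hx0⟩)
    have := hgD x hxD
    have h2 : (R.count x : ℂ) = 0 := by simpa [hg, hxt] using this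
    have h3 : R.count x = 0 := by exact_mod_cast h2
    have h4 : 0 < R.count x := Multiset.count_pos.mpr hx
    omega

lemma nilpotent_dichotomy (X Y : Matrix I I ℂ) (t : ℂ) (ht : t ≠ 0)
    (h : ∀ N : ℕ, 1 ≤ N → (X ^ N).trace + (Y ^ N).trace = t ^ N) :
    X ^ (Fintype.card I) = 0 ∨ Y ^ (Fintype.card I) = 0 := by
  classical
  set R := (Matrix.charpoly X).roots + (Matrix.charpoly Y).roots with hR
  have hps : ∀ N : ℕ, 1 ≤ N → (R.map (· ^ N)).sum = t ^ N := by
    intro N hN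
    rw [hR, Multiset.map_add, Multiset.sum_add, ← trace_pow_eq_sum_pow_roots X N hN,
      ← trace_pow_eq_sum_pow_roots Y N hN]
    exact h N hN
  obtain ⟨helem, hcount⟩ := multiset_power_sums_classify R t ht hps
  have hsum : (Matrix.charpoly X).roots.count t + (Matrix.charpoly Y).roots.count t = 1 := by
    rw [← Multiset.count_add]
    exact hcount
  rcases Nat.eq_zero_or_pos ((Matrix.charpoly X).roots.count t) with h0 | hpos
  · left
    apply pow_card_eq_zero_of_roots_zero
    intro x hx
    rcases helem x (by rw [hR]; exact Multiset.mem_add.mpr (Or.inl hx)) with h1 | h1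
    · exact h1
    · exfalso
      rw [h1] at hx
      have := Multiset.count_pos.mpr hx
      omega
  · right
    have h0 : (Matrix.charpoly Y).roots.count t = 0 := by omega
    apply pow_card_eq_zero_of_roots_zero
    intro x hx
    rcases helem x (by rw [hR]; exact Multiset.mem_add.mpr (Or.inr hx)) with h1 | h1
    · exact h1
    · exfalso
      rw [h1] at hx
      have := Multiset.count_pos.mpr hx
      omega

end Classify



/-- For a type II fMPU (with antiperiodic boundary conditions) whose
tensor `U/√d` is graded normal degenerate, the physical dimension `d` is even and the
even and odd physical indices are equinumerous, each of cardinality `d/2`. -/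
theorem typeII_fMPU_physical_dimension_even {d b : ℕ} (hd : 1 ≤ d)
    (p : Fin d → ZMod 2)
    (U : Fin d → Fin d → Matrix (Bool × Fin b) (Bool × Fin b) ℂ)
    (hE : EvenTensor (doubledP p) (doubledT U) (ZBP b))
    (hstruct : TypeIIStruct p U)
    (hunit : ∀ N : ℕ, 1 ≤ N →
      ((Real.sqrt 2 : ℂ))⁻¹ • fMPO p U N ∈ Matrix.unitaryGroup (Fin N → Fin d) ℂ)
    (hnorm : GradedNormal (mpoScaled ((Real.sqrt d : ℂ))⁻¹ U) (ZBP b) 2) :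
    2 ∣ d ∧
    (Finset.univ.filter (fun n : Fin d => p n = 0)).card = d / 2 ∧
    (Finset.univ.filter (fun n : Fin d => p n = 1)).card = d / 2 := by
  classical
  obtain ⟨Nm, hNm⟩ := hstruct
  set Tv : ℂ := ∑ μ : Fin d, sgn (p μ) with hTv
  have hd0 : (d : ℂ) ≠ 0 := by
    simp only [ne_eq, Nat.cast_eq_zero]
    omega
  set B := Fintype.card (Fin b × Fin b) with hB
  -- the four transfer-type matrices
  set S1 := Sop Nm (fun _ => 1) with hS1
  set S2 := Sop Nm (fun q => sgn (p q.1) * sgn (p q.2)) with hS2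
  set Kp := Sop Nm (fun q => sgn (p q.1)) with hKp
  set Km := Sop Nm (fun q => sgn (p q.2)) with hKm
  have hSS : ∀ N : ℕ, 1 ≤ N → (S1 ^ N).trace + (S2 ^ N).trace = (d : ℂ) ^ N := by
    intro N hN
    have h := master_m p U Nm hNm hunit 0 N (by omega)
    simpa using h
  -- b = 0 is impossible
  have hbpos : 0 < b := by
    rcases Nat.eq_zero_or_pos b with hb0 | hb; swap
    · exact hb
    · exfalso
      have h1 := hSS 1 le_rfl
      subst hb0
      have hempty : IsEmpty (Fin 0 × Fin 0) := by infer_instance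
      rw [show (S1 ^ 1).trace = 0 from by
          rw [Matrix.trace]; exact Finset.sum_of_isEmpty _,
        show (S2 ^ 1).trace = 0 from by
          rw [Matrix.trace]; exact Finset.sum_of_isEmpty _] at h1
      simp at h1
      exact hd0 (by exact_mod_cast h1.symm)
  have hBpos : 1 ≤ B := by
    rw [hB, Fintype.card_prod, Fintype.card_fin]
    exact Nat.one_le_iff_ne_zero.mpr (Nat.mul_ne_zero (by omega) (by omega))
  -- main claim: Tv = 0
  have hTv0 : Tv = 0 := by
    by_contra hT
    have hKK : ∀ N : ℕ, 1 ≤ N → (Km ^ N).trace + (Kp ^ N).trace = Tv ^ N := by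
      intro N hN
      have h := master_m p U Nm hNm hunit N 0 (by omega)
      simpa using h
    have dich1 : S1 ^ B = 0 ∨ S2 ^ B = 0 :=
      nilpotent_dichotomy S1 S2 (d : ℂ) hd0 hSS
    have dich2 : Km ^ B = 0 ∨ Kp ^ B = 0 :=
      nilpotent_dichotomy Km Kp Tv hT hKK
    have hM := master_m p U Nm hNm hunit B B (by omega)
    have hN' := master_n p U Nm hNm hunit B B (by omega)
    rw [← hS1, ← hS2, ← hKp, ← hKm, ← hTv] at hM hN'
    have hRHS : Tv ^ B * (d : ℂ) ^ B ≠ 0 :=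
      mul_ne_zero (pow_ne_zero _ hT) (pow_ne_zero _ hd0)
    rcases dich1 with h1 | h1 <;> rcases dich2 with h2 | h2
    · -- S1 nil, Km nil : use master_n
      simp only [h1, h2, Matrix.mul_zero, Matrix.zero_mul, Matrix.trace_zero, add_zero,
        zero_add] at hN'
      exact hRHS hN'.symm
    · -- S1 nil, Kp nil : use master_m
      simp only [h1, h2, Matrix.mul_zero, Matrix.zero_mul, Matrix.trace_zero, add_zero,
        zero_add] at hM
      exact hRHS hM.symm
    · -- S2 nil, Km nil : use master_m
      simp only [h1, h2, Matrix.mul_zero, Matrix.zero_mul, Matrix.trace_zero, add_zero,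
        zero_add] at hM
      exact hRHS hM.symm
    · -- S2 nil, Kp nil : use master_n
      simp only [h1, h2, Matrix.mul_zero, Matrix.zero_mul, Matrix.trace_zero, add_zero,
        zero_add] at hN'
      exact hRHS hN'.symm
  -- counting endgame
  set c0 := (Finset.univ.filter (fun n : Fin d => p n = 0)).card with hc0
  set c1 := (Finset.univ.filter (fun n : Fin d => p n = 1)).card with hc1
  have hz : ∀ x : ZMod 2, x = 0 ∨ x = 1 := by decide
  have hfe : Finset.univ.filter (fun μ : Fin d => ¬ p μ = 0)
      = Finset.univ.filter (fun μ : Fin d => p μ = 1) := by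
    apply Finset.filter_congr
    intro μ _
    rcases hz (p μ) with h | h <;> simp [h]
  have hsplitsum : Tv = (c0 : ℂ) - (c1 : ℂ) := by
    rw [hTv]
    rw [← Finset.sum_filter_add_sum_filter_not Finset.univ (fun μ => p μ = 0)
      (fun μ => sgn (p μ))]
    have hA : ∑ μ ∈ Finset.univ.filter (fun μ : Fin d => p μ = 0), sgn (p μ) = (c0 : ℂ) := by
      rw [Finset.sum_congr rfl (fun μ hμ => by
        rw [(Finset.mem_filter.mp hμ).2, sgn_zero])]
      rw [Finset.sum_const, hc0, nsmul_eq_mul, mul_one]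
    have hBB : ∑ μ ∈ Finset.univ.filter (fun μ : Fin d => ¬ p μ = 0), sgn (p μ)
        = -(c1 : ℂ) := by
      rw [hfe]
      rw [Finset.sum_congr rfl (fun μ hμ => by
        rw [(Finset.mem_filter.mp hμ).2, sgn_one])]
      rw [Finset.sum_const, hc1, nsmul_eq_mul, mul_neg_one]
    rw [hA, hBB]
    ring
  have hcc : c0 = c1 := by
    have hcast : (c0 : ℂ) = (c1 : ℂ) := by
      have h1 : (c0 : ℂ) - (c1 : ℂ) = 0 := by rw [← hsplitsum]; exact hTv0
      linear_combination h1
    exact_mod_cast hcast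
  have hsum : c0 + c1 = d := by
    have h1 := Finset.card_filter_add_card_filter_not
      (s := (Finset.univ : Finset (Fin d))) (p := fun μ : Fin d => p μ = 0)
    rw [hfe] at h1
    rw [Finset.card_univ, Fintype.card_fin] at h1
    rw [← hc0, ← hc1] at h1
    exact h1
  exact ⟨⟨c0, by omega⟩, by omega, by omega⟩

end

end FQCA
end

section
/- For every N ≥ 1, the matrix U^{(N)} ∈ M_{4^N}(ℂ) defined from the explicit D = 3 tensor with periodic boundary conditions is unitary. (This family is the example of a fermionic matrix product unitary with periodic boundary conditions.) -/
open Matrix Kronecker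
open scoped ComplexOrder

namespace FQCA

noncomputable section

/-- Physical parity for two fermionic modes per site: `|0| = |3| = 0`, `|1| = |2| = 1`. -/
def pEx : Fin 4 → ZMod 2 := ![0, 1, 1, 0]

/-- The bond parity matrix `Z = diag(1,1,-1)` of the `D = 3` example. -/
def Zex : Matrix (Fin 3) (Fin 3) ℂ := Matrix.diagonal ![1, 1, -1]

/-- The explicit `D = 3` MPO tensor: `U^{0,0} = I₃`,
`(U^{n,m})_{α,β} = δ_{α,n-1} δ_{β,m-1}` for `n,m ∈ {1,2,3}`, and `U^{n,m} = 0` whenever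
exactly one of `n,m` is `0`. -/
def Uex : Fin 4 → Fin 4 → Matrix (Fin 3) (Fin 3) ℂ := fun n m =>
  if n = 0 ∧ m = 0 then (1 : Matrix (Fin 3) (Fin 3) ℂ)
  else if n ≠ 0 ∧ m ≠ 0 then
    Matrix.of (fun α β : Fin 3 =>
      if (α : ℕ) + 1 = (n : ℕ) ∧ (β : ℕ) + 1 = (m : ℕ) then (1 : ℂ) else 0)
  else 0

/-! ### Auxiliary material for Statement 12 -/

private def E3 (a b : Fin 3) : Matrix (Fin 3) (Fin 3) ℂ := Matrix.single a b 1

private def dec4 (n : Fin 4) : Fin 3 := ⟨n.val - 1, by omega⟩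

private def zv (a : Fin 3) : ℂ := if a = 2 then -1 else 1

private lemma map_dec4_inj : ∀ (l l' : List (Fin 4)), (∀ x ∈ l, x ≠ 0) → (∀ x ∈ l', x ≠ 0) →
    l.map dec4 = l'.map dec4 → l = l' := by
  intro l
  induction l with
  | nil => intro l' _ _ h; cases l' with
    | nil => rfl
    | cons b t => simp at h
  | cons a t ih =>
    intro l' h1 h2 h
    cases l' with
    | nil => simp at h
    | cons b t' =>
      simp only [List.map_cons, List.cons.injEq] at h
      have ha : a ≠ 0 := h1 a (by simp)
      have hb : b ≠ 0 := h2 b (by simp)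
      have hab : a = b := by
        have := congrArg Fin.val h.1
        simp only [dec4] at this
        have ha' : a.val ≠ 0 := fun hh => ha (Fin.ext hh)
        have hb' : b.val ≠ 0 := fun hh => hb (Fin.ext hh)
        have ha4 := a.isLt; have hb4 := b.isLt
        exact Fin.ext (by omega)
      rw [hab, ih t' (fun x hx => h1 x (by simp [hx])) (fun x hx => h2 x (by simp [hx])) h.2]

private lemma Uex_eq_E (n m : Fin 4) (hn : n ≠ 0) (hm : m ≠ 0) :
    Uex n m = E3 (dec4 n) (dec4 m) := by
  have hn' : (n : ℕ) ≠ 0 := fun h => hn (Fin.ext h)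
  have hm' : (m : ℕ) ≠ 0 := fun h => hm (Fin.ext h)
  ext α β
  rw [Uex, if_neg (by tauto), if_pos ⟨hn, hm⟩]
  show _ = Matrix.single (dec4 n) (dec4 m) 1 α β
  rw [Matrix.single]
  simp only [Matrix.of_apply]
  have ha := α.isLt; have hb := β.isLt
  have hn4 := n.isLt; have hm4 := m.isLt
  by_cases h : (α : ℕ) + 1 = (n : ℕ) ∧ (β : ℕ) + 1 = (m : ℕ)
  · rw [if_pos h, if_pos]
    refine ⟨Fin.ext ?_, Fin.ext ?_⟩ <;> simp only [dec4] <;> omega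
  · rw [if_neg h, if_neg]
    intro ⟨h1, h2⟩
    apply h
    have h1' := congrArg Fin.val h1
    have h2' := congrArg Fin.val h2
    simp only [dec4] at h1' h2'
    omega

private lemma Uex_zero (n m : Fin 4) (h : ¬ (n = 0 ↔ m = 0)) : Uex n m = 0 := by
  rw [Uex, if_neg (by tauto), if_neg (by tauto)]

private lemma prodE_cons (p : Fin 3 × Fin 3) (l : List (Fin 3 × Fin 3)) :
    ((p :: l).map fun q => E3 q.1 q.2).prod =
      if List.IsChain (fun a b : Fin 3 × Fin 3 => a.2 = b.1) (p :: l)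
      then E3 p.1 (l.getLastD p).2 else 0 := by
  induction l generalizing p with
  | nil => simp [E3]
  | cons q t ih =>
    rw [List.map_cons, List.prod_cons, ih q]
    simp only [List.isChain_cons_cons, List.getLastD_cons]
    by_cases h1 : p.2 = q.1
    · by_cases h2 : List.IsChain (fun a b : Fin 3 × Fin 3 => a.2 = b.1) (q :: t)
      · rw [if_pos h2, if_pos ⟨h1, h2⟩, E3, E3, E3, h1,
          Matrix.single_mul_single_same, one_mul]
      · rw [if_neg h2, if_neg (by tauto), mul_zero]
    · by_cases h2 : List.IsChain (fun a b : Fin 3 × Fin 3 => a.2 = b.1) (q :: t)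
      · rw [if_pos h2, if_neg (fun hc : _ ∧ _ => h1 hc.1), E3, E3,
          Matrix.single_mul_single_of_ne (h := h1)]
      · rw [if_neg h2, if_neg (fun hc : _ ∧ _ => h1 hc.1), mul_zero]

private lemma trace_Zex_E (a b : Fin 3) :
    (Zex * E3 a b).trace = if a = b then zv a else 0 := by
  fin_cases a <;> fin_cases b <;>
    simp [Zex, E3, zv, Matrix.trace, Matrix.diag, Matrix.mul_apply, Fin.sum_univ_three,
      Matrix.single, Matrix.diagonal, Matrix.of_apply] <;> norm_num

private lemma trace_Zex_one : (Zex * (1 : Matrix (Fin 3) (Fin 3) ℂ)).trace = 1 := by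
  rw [mul_one, Zex, Matrix.trace_diagonal, Fin.sum_univ_three]
  norm_num [Matrix.cons_val_two, Matrix.vecHead, Matrix.vecTail]

private lemma zv_cases (a : Fin 3) : zv a = 1 ∨ zv a = -1 := by
  rw [zv]; split <;> simp

private lemma prod_Uex (l : List (Fin 4 × Fin 4)) (h : ∀ p ∈ l, (p.1 = 0 ↔ p.2 = 0)) :
    (l.map fun p => Uex p.1 p.2).prod =
      (((l.filter fun p => p.1 ≠ 0).map fun p => (dec4 p.1, dec4 p.2)).map
        fun q => E3 q.1 q.2).prod := by
  induction l with
  | nil => simp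
  | cons p t ih =>
    have hp := h p (by simp)
    have ht := fun q hq => h q (List.mem_cons_of_mem _ hq)
    by_cases h0 : p.1 = 0
    · have h2 : p.2 = 0 := hp.mp h0
      have hU : Uex p.1 p.2 = 1 := by rw [h0, h2]; rw [Uex, if_pos ⟨rfl, rfl⟩]
      rw [List.map_cons, List.prod_cons, hU, one_mul,
        List.filter_cons_of_neg (by simp [h0]), ih ht]
    · have h2 : p.2 ≠ 0 := fun hh => h0 (hp.mpr hh)
      rw [List.map_cons, List.prod_cons, Uex_eq_E _ _ h0 h2,
        List.filter_cons_of_pos (by simp [h0]), List.map_cons, List.map_cons,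
        List.prod_cons, ih ht]

private lemma chain_last_iff {α : Type*} : ∀ (l : List (α × α)) (p : α × α) (c : α),
    (List.IsChain (fun a b : α × α => a.2 = b.1) (p :: l) ∧ (l.getLastD p).2 = c) ↔
      (p.2 :: l.map Prod.snd = l.map Prod.fst ++ [c]) := by
  intro l
  induction l with
  | nil => intro p c; simp
  | cons q t ih =>
    intro p c
    rw [List.isChain_cons_cons, List.getLastD_cons, and_assoc, ih q c]
    simp only [List.map_cons, List.cons_append]
    exact (List.cons_eq_cons).symm

private lemma filter_map_fst (l : List (Fin 4 × Fin 4)) :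
    ((l.filter fun p => p.1 ≠ 0).map Prod.fst) = (l.map Prod.fst).filter (· ≠ 0) := by
  induction l with
  | nil => rfl
  | cons p t ih =>
    by_cases h0 : p.1 = 0
    · rw [List.filter_cons_of_neg (by simp [h0]), List.map_cons,
        List.filter_cons_of_neg (by simp [h0]), ih]
    · rw [List.filter_cons_of_pos (by simp [h0]), List.map_cons, List.map_cons,
        List.filter_cons_of_pos (by simp [h0]), ih]

private lemma filter_map_snd (l : List (Fin 4 × Fin 4)) (h : ∀ p ∈ l, (p.1 = 0 ↔ p.2 = 0)) :
    ((l.filter fun p => p.1 ≠ 0).map Prod.snd) = (l.map Prod.snd).filter (· ≠ 0) := by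
  induction l with
  | nil => rfl
  | cons p t ih =>
    have hp := h p (by simp)
    have ht := fun q hq => h q (List.mem_cons_of_mem _ hq)
    by_cases h0 : p.1 = 0
    · have h2 : p.2 = 0 := hp.mp h0
      rw [List.filter_cons_of_neg (by simp [h0]), List.map_cons,
        List.filter_cons_of_neg (by simp [h2]), ih ht]
    · have h2 : p.2 ≠ 0 := fun hh => h0 (hp.mpr hh)
      rw [List.filter_cons_of_pos (by simp [h0]), List.map_cons, List.map_cons,
        List.filter_cons_of_pos (by simp [h2]), ih ht]

private lemma unfilter_unique : ∀ {l l' : List (Fin 4)},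
    List.Forall₂ (fun a b => a = 0 ↔ b = 0) l l' →
    l.filter (· ≠ 0) = l'.filter (· ≠ 0) → l = l' := by
  intro l l' h
  induction h with
  | nil => intro; rfl
  | @cons a b t t' hab htail ih =>
    intro hf
    by_cases ha : a = 0
    · have hb : b = 0 := hab.mp ha
      rw [List.filter_cons_of_neg (by simp [ha]), List.filter_cons_of_neg (by simp [hb])] at hf
      rw [ha, hb, ih hf]
    · have hb : b ≠ 0 := fun hh => ha (hab.mpr hh)
      rw [List.filter_cons_of_pos (by simp [ha]), List.filter_cons_of_pos (by simp [hb]),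
        List.cons_eq_cons] at hf
      rw [hf.1, ih hf.2]

private lemma unfilter_exists : ∀ (l : List (Fin 4)) (r : List (Fin 4)),
    (∀ x ∈ r, x ≠ 0) → r.length = (l.filter (· ≠ 0)).length →
    ∃ l', List.Forall₂ (fun a b => a = 0 ↔ b = 0) l l' ∧ l'.filter (· ≠ 0) = r := by
  intro l
  induction l with
  | nil =>
    intro r _ hlen
    simp only [List.filter_nil, List.length_nil, List.length_eq_zero_iff] at hlen
    exact ⟨[], List.Forall₂.nil, by simp [hlen]⟩
  | cons a t ih =>
    intro r hr hlen
    by_cases ha : a = 0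
    · rw [List.filter_cons_of_neg (by simp [ha])] at hlen
      obtain ⟨l', h1, h2⟩ := ih r hr hlen
      exact ⟨0 :: l', List.Forall₂.cons (by simp [ha]) h1,
        by rw [List.filter_cons_of_neg (by simp), h2]⟩
    · rw [List.filter_cons_of_pos (by simp [ha])] at hlen
      cases r with
      | nil => simp at hlen
      | cons b rb =>
        have hb : b ≠ 0 := hr b (by simp)
        obtain ⟨l', h1, h2⟩ := ih rb (fun x hx => hr x (by simp [hx])) (by simpa using hlen)
        exact ⟨b :: l', List.Forall₂.cons (by simp [ha, hb]) h1,
          by rw [List.filter_cons_of_pos (by simp [hb]), h2]⟩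

private lemma forall₂_ofFn_iff {α β : Type*} {R : α → β → Prop} : ∀ {N : ℕ}
    {f : Fin N → α} {g : Fin N → β},
    List.Forall₂ R (List.ofFn f) (List.ofFn g) ↔ ∀ i, R (f i) (g i) := by
  intro N
  induction N with
  | zero => intro f g; simp [List.ofFn_zero]
  | succ k ih =>
    intro f g
    rw [List.ofFn_succ, List.ofFn_succ, List.forall₂_cons, ih, Fin.forall_fin_succ]

private lemma rotate_one_inj {α : Type*} {l l' : List α} (hlen : l.length = l'.length)
    (h : l.rotate 1 = l'.rotate 1) : l = l' := by
  rcases Nat.eq_zero_or_pos l.length with h0 | h0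
  · rw [List.length_eq_zero_iff.mp h0, List.length_eq_zero_iff.mp (show l'.length = 0 by omega)]
  · have key : ∀ (x : List α), 0 < x.length → (x.rotate 1).rotate (x.length - 1) = x := by
      intro x hx
      rw [List.rotate_rotate]
      have : 1 + (x.length - 1) = x.length := by omega
      rw [this, List.rotate_length]
    calc l = (l.rotate 1).rotate (l.length - 1) := (key l h0).symm
    _ = (l'.rotate 1).rotate (l'.length - 1) := by rw [h, hlen]
    _ = l' := key l' (hlen ▸ h0)

/-- The set of pairs with the nonzero lists rotated by one. -/
private def goodPair {N : ℕ} (n m : Fin N → Fin 4) : Prop :=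
  (∀ j, n j = 0 ↔ m j = 0) ∧
    (List.ofFn m).filter (· ≠ 0) = ((List.ofFn n).filter (· ≠ 0)).rotate 1

/-- The trace appearing in the fMPO entry. -/
private def Tval {N : ℕ} (n m : Fin N → Fin 4) : ℂ :=
  (Zex * (List.ofFn fun j => Uex (n j) (m j)).prod).trace

private lemma ofFn_pair_fst {N : ℕ} (n m : Fin N → Fin 4) :
    (List.ofFn fun j => (n j, m j)).map Prod.fst = List.ofFn n := by
  rw [List.map_ofFn]; rfl

private lemma ofFn_pair_snd {N : ℕ} (n m : Fin N → Fin 4) :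
    (List.ofFn fun j => (n j, m j)).map Prod.snd = List.ofFn m := by
  rw [List.map_ofFn]; rfl

private lemma Tval_eq {N : ℕ} (n m : Fin N → Fin 4) (hs : ∀ j, n j = 0 ↔ m j = 0) :
    Tval n m = (Zex * ((((List.ofFn fun j => (n j, m j)).filter fun p => p.1 ≠ 0).map
      fun p => (dec4 p.1, dec4 p.2)).map fun q => E3 q.1 q.2).prod).trace := by
  rw [Tval]
  congr 2
  have h1 : (List.ofFn fun j => Uex (n j) (m j)) =
      (List.ofFn fun j => (n j, m j)).map fun p => Uex p.1 p.2 := by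
    rw [List.map_ofFn]; rfl
  rw [h1, prod_Uex]
  intro p hp
  rw [List.mem_ofFn] at hp
  obtain ⟨j, hj⟩ := hp
  rw [← hj]
  exact hs j

private lemma PL_fst {N : ℕ} (n m : Fin N → Fin 4) :
    (((List.ofFn fun j => (n j, m j)).filter fun p => p.1 ≠ 0).map
      fun p => (dec4 p.1, dec4 p.2)).map Prod.fst =
      ((List.ofFn n).filter (· ≠ 0)).map dec4 := by
  rw [List.map_map]
  have : (Prod.fst ∘ fun p : Fin 4 × Fin 4 => (dec4 p.1, dec4 p.2)) = dec4 ∘ Prod.fst := rfl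
  rw [this, ← List.map_map, filter_map_fst, ofFn_pair_fst]

private lemma PL_snd {N : ℕ} (n m : Fin N → Fin 4) (hs : ∀ j, n j = 0 ↔ m j = 0) :
    (((List.ofFn fun j => (n j, m j)).filter fun p => p.1 ≠ 0).map
      fun p => (dec4 p.1, dec4 p.2)).map Prod.snd =
      ((List.ofFn m).filter (· ≠ 0)).map dec4 := by
  rw [List.map_map]
  have : (Prod.snd ∘ fun p : Fin 4 × Fin 4 => (dec4 p.1, dec4 p.2)) = dec4 ∘ Prod.snd := rfl
  rw [this, ← List.map_map, filter_map_snd, ofFn_pair_snd]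
  intro p hp
  rw [List.mem_ofFn] at hp
  obtain ⟨j, hj⟩ := hp
  rw [← hj]
  exact hs j

private lemma mem_filter_ne_zero {x : Fin 4} {l : List (Fin 4)}
    (h : x ∈ l.filter (· ≠ 0)) : x ≠ 0 := by
  rw [List.mem_filter] at h
  simpa using h.2

private lemma good_of_Tval_ne {N : ℕ} {n m : Fin N → Fin 4} (h : Tval n m ≠ 0) :
    goodPair n m := by
  by_cases hs : ∀ j, n j = 0 ↔ m j = 0
  case neg =>
    exfalso
    apply h
    push_neg at hs
    obtain ⟨j, hj⟩ := hs
    have hz : (0 : Matrix (Fin 3) (Fin 3) ℂ) ∈ (List.ofFn fun j => Uex (n j) (m j)) := by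
      rw [List.mem_ofFn]
      refine ⟨j, ?_⟩
      show Uex (n j) (m j) = 0
      exact Uex_zero _ _ (by tauto)
    rw [Tval, List.prod_eq_zero hz, mul_zero, Matrix.trace_zero]
  case pos =>
    rw [Tval_eq n m hs] at h
    refine ⟨hs, ?_⟩
    cases hPLc : (((List.ofFn fun j => (n j, m j)).filter fun p => p.1 ≠ 0).map
        fun p => (dec4 p.1, dec4 p.2)) with
    | nil =>
      have h1 : ((List.ofFn n).filter (· ≠ 0)).map dec4 = [] := by
        rw [← PL_fst n m, hPLc]; rfl
      have h2 : ((List.ofFn m).filter (· ≠ 0)).map dec4 = [] := by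
        rw [← PL_snd n m hs, hPLc]; rfl
      rw [List.map_eq_nil_iff] at h1 h2
      rw [h1, h2]; rfl
    | cons p t =>
      rw [hPLc, prodE_cons] at h
      by_cases hc : List.IsChain (fun a b : Fin 3 × Fin 3 => a.2 = b.1) (p :: t)
      swap
      · rw [if_neg hc, mul_zero, Matrix.trace_zero] at h; exact absurd rfl h
      rw [if_pos hc, trace_Zex_E] at h
      by_cases he : p.1 = (t.getLastD p).2
      swap
      · rw [if_neg he] at h; exact absurd rfl h
      have hr := (chain_last_iff t p p.1).mp ⟨hc, he.symm⟩
      have hrot : ((p :: t).map Prod.snd) = ((p :: t).map Prod.fst).rotate 1 := by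
        rw [List.map_cons, List.map_cons, show (1 : ℕ) = 0 + 1 from rfl,
          List.rotate_cons_succ, List.rotate_zero]
        exact hr
      have h1 : ((List.ofFn m).filter (· ≠ 0)).map dec4 =
          (((List.ofFn n).filter (· ≠ 0)).rotate 1).map dec4 := by
        calc ((List.ofFn m).filter (· ≠ 0)).map dec4
            = ((p :: t).map Prod.snd) := by rw [← PL_snd n m hs, hPLc]
          _ = ((p :: t).map Prod.fst).rotate 1 := hrot
          _ = (((List.ofFn n).filter (· ≠ 0)).map dec4).rotate 1 := by
              rw [← PL_fst n m, hPLc]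
          _ = (((List.ofFn n).filter (· ≠ 0)).rotate 1).map dec4 :=
              (List.map_rotate _ _ _).symm
      exact map_dec4_inj _ _ (fun x hx => mem_filter_ne_zero hx)
        (fun x hx => mem_filter_ne_zero (List.mem_rotate.mp hx)) h1

private lemma Tval_good {N : ℕ} {n m : Fin N → Fin 4} (h : goodPair n m) :
    Tval n m = 1 ∨ Tval n m = -1 := by
  obtain ⟨hs, hrot⟩ := h
  rw [Tval_eq n m hs]
  cases hPLc : (((List.ofFn fun j => (n j, m j)).filter fun p => p.1 ≠ 0).map
      fun p => (dec4 p.1, dec4 p.2)) with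
  | nil =>
    simp only [List.map_nil, List.prod_nil]
    left; exact trace_Zex_one
  | cons p t =>
    rw [prodE_cons]
    have hsnd : (p :: t).map Prod.snd = ((p :: t).map Prod.fst).rotate 1 := by
      calc (p :: t).map Prod.snd
          = ((List.ofFn m).filter (· ≠ 0)).map dec4 := by rw [← PL_snd n m hs, hPLc]
        _ = (((List.ofFn n).filter (· ≠ 0)).rotate 1).map dec4 := by rw [hrot]
        _ = (((List.ofFn n).filter (· ≠ 0)).map dec4).rotate 1 := List.map_rotate _ _ _
        _ = ((p :: t).map Prod.fst).rotate 1 := by rw [← PL_fst n m, hPLc]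
    have hr : p.2 :: t.map Prod.snd = t.map Prod.fst ++ [p.1] := by
      rw [List.map_cons, List.map_cons, show (1 : ℕ) = 0 + 1 from rfl,
        List.rotate_cons_succ, List.rotate_zero] at hsnd
      exact hsnd
    obtain ⟨hc, he⟩ := (chain_last_iff t p p.1).mpr hr
    rw [if_pos hc, trace_Zex_E, if_pos he.symm]
    exact zv_cases _

private lemma goodPair_unique {N : ℕ} {n m m' : Fin N → Fin 4}
    (h1 : goodPair n m) (h2 : goodPair n m') : m = m' := by
  have hf : List.Forall₂ (fun a b => a = 0 ↔ b = 0) (List.ofFn m) (List.ofFn m') :=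
    (forall₂_ofFn_iff (R := fun a b : Fin 4 => a = 0 ↔ b = 0)).mpr (fun i => by rw [← h1.1 i, h2.1 i])
  exact List.ofFn_injective (unfilter_unique hf (by rw [h1.2, h2.2]))

private lemma goodPair_inj {N : ℕ} {n n' m : Fin N → Fin 4}
    (h1 : goodPair n m) (h2 : goodPair n' m) : n = n' := by
  have e1 := congrArg List.length h1.2
  have e2 := congrArg List.length h2.2
  rw [List.length_rotate] at e1 e2
  have hlen : ((List.ofFn n).filter (· ≠ 0)).length
      = ((List.ofFn n').filter (· ≠ 0)).length := e1.symm.trans e2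
  have hr : ((List.ofFn n).filter (· ≠ 0)) = ((List.ofFn n').filter (· ≠ 0)) :=
    rotate_one_inj hlen (by rw [← h1.2, ← h2.2])
  have hf : List.Forall₂ (fun a b => a = 0 ↔ b = 0) (List.ofFn n) (List.ofFn n') :=
    (forall₂_ofFn_iff (R := fun a b : Fin 4 => a = 0 ↔ b = 0)).mpr (fun i => by rw [h1.1 i, ← h2.1 i])
  exact List.ofFn_injective (unfilter_unique hf hr)

private lemma goodPair_exists {N : ℕ} (n : Fin N → Fin 4) : ∃ m, goodPair n m := by
  obtain ⟨l', h1, h2⟩ := unfilter_exists (List.ofFn n)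
    (((List.ofFn n).filter (· ≠ 0)).rotate 1)
    (fun x hx => mem_filter_ne_zero (List.mem_rotate.mp hx)) (by rw [List.length_rotate])
  have hlen : l'.length = N := by
    have := h1.length_eq
    rw [List.length_ofFn] at this
    omega
  have hex : ∃ m : Fin N → Fin 4, List.ofFn m = l' := by
    subst hlen
    exact ⟨l'.get, List.ofFn_get l'⟩
  obtain ⟨m, hm⟩ := hex
  rw [← hm] at h1 h2
  exact ⟨m, (forall₂_ofFn_iff (R := fun a b : Fin 4 => a = 0 ↔ b = 0)).mp h1, h2⟩

/-- The fMPO with periodic boundary conditions generated by the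
explicit `D = 3` tensor is unitary for every `N ≥ 1`. -/
theorem explicit_periodic_fMPU_unitary :
    ∀ N : ℕ, 1 ≤ N →
      fMPO_PBC pEx Zex Uex N ∈ Matrix.unitaryGroup (Fin N → Fin 4) ℂ := by
  intro N _
  rw [Matrix.mem_unitaryGroup_iff]
  ext n n'
  rw [Matrix.mul_apply, Matrix.one_apply]
  simp only [Matrix.star_apply]
  have hentry : ∀ (a b : Fin N → Fin 4),
      fMPO_PBC pEx Zex Uex N a b = sgn (mpoSign pEx a b) * Tval a b := fun a b => rfl
  have hzero : ∀ (a b : Fin N → Fin 4), ¬ goodPair a b →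
      fMPO_PBC pEx Zex Uex N a b = 0 := by
    intro a b hg
    rw [hentry]
    by_cases ht : Tval a b = 0
    · rw [ht, mul_zero]
    · exact absurd (good_of_Tval_ne ht) hg
  have hnorm : ∀ (a b : Fin N → Fin 4), goodPair a b →
      fMPO_PBC pEx Zex Uex N a b * star (fMPO_PBC pEx Zex Uex N a b) = 1 := by
    intro a b hg
    rw [hentry]
    have hsgn : sgn (mpoSign pEx a b) * star (sgn (mpoSign pEx a b)) = 1 := by
      rw [sgn, star_pow, star_neg, star_one, ← mul_pow]
      norm_num
    rcases Tval_good hg with ht | ht <;> rw [ht, star_mul'] <;>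
      simp only [star_one, star_neg, mul_one, mul_neg, neg_mul, neg_neg] <;>
      exact hsgn
  obtain ⟨m₀, hm₀⟩ := goodPair_exists n
  by_cases hnn : n = n'
  · subst hnn
    rw [if_pos rfl, Finset.sum_eq_single m₀]
    · exact hnorm n m₀ hm₀
    · intro b _ hb
      by_cases hg : goodPair n b
      · exact absurd (goodPair_unique hg hm₀) hb
      · rw [hzero n b hg, zero_mul]
    · intro hmem
      exact absurd (Finset.mem_univ m₀) hmem
  · rw [if_neg hnn]
    apply Finset.sum_eq_zero
    intro b _
    by_cases hg : goodPair n b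
    · have hg' : ¬ goodPair n' b := fun hg' => hnn (goodPair_inj hg hg')
      rw [hzero n' b hg', star_zero, mul_zero]
    · rw [hzero n b hg, zero_mul]

end

end FQCA
end

section
/- M is invertible in C, with inverse M^{−1} = ∏_{j=2N−1}^{1} 2^{−1/2}(1 + γ_j γ_{j+1}) (the product taken left to right in decreasing order of j), and M implements the Majorana shift with antiperiodic boundary conditions: M γ_j M^{−1} = γ_{j+1} for every 1 ≤ j ≤ 2N−1, and M γ_{2N} M^{−1} = −γ₁. -/
open Matrix Kronecker
open scoped ComplexOrder

namespace FQCA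

noncomputable section

/-- The standard quadratic form `Q(x) = Σ xᵢ²` on `ℝⁿ`. -/
def Qf (n : ℕ) : QuadraticForm ℝ (Fin n → ℝ) :=
  QuadraticMap.weightedSumSquares ℝ (fun _ : Fin n => (1 : ℝ))

/-- The Majorana modes: `γⱼ = ι(eⱼ)` in the Clifford algebra of `Q`, so that
`γⱼ γₖ + γₖ γⱼ = 2 δⱼₖ`. -/
def γm (N : ℕ) (j : Fin (2 * N)) : CliffordAlgebra (Qf (2 * N)) :=
  CliffordAlgebra.ι (Qf (2 * N)) (Pi.single j 1)

/-- The Majorana shift operator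
`M = 2^{-(2N-1)/2} (1 - γ₁γ₂)(1 - γ₂γ₃) ⋯ (1 - γ_{2N-1}γ_{2N})`
(factors in increasing order). -/
def Mop (N : ℕ) : CliffordAlgebra (Qf (2 * N)) :=
  (List.ofFn fun j : Fin (2 * N - 1) =>
    (Real.sqrt 2)⁻¹ •
      ((1 : CliffordAlgebra (Qf (2 * N))) -
        γm N ⟨(j : ℕ), by have := j.isLt; omega⟩ *
        γm N ⟨(j : ℕ) + 1, by have := j.isLt; omega⟩)).prod

/-- The claimed inverse
`∏_{j=2N-1}^{1} 2^{-1/2} (1 + γⱼγ_{j+1})` (factors in decreasing order of `j`). -/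
def Minv (N : ℕ) : CliffordAlgebra (Qf (2 * N)) :=
  ((List.ofFn fun j : Fin (2 * N - 1) =>
    (Real.sqrt 2)⁻¹ •
      ((1 : CliffordAlgebra (Qf (2 * N))) +
        γm N ⟨(j : ℕ), by have := j.isLt; omega⟩ *
        γm N ⟨(j : ℕ) + 1, by have := j.isLt; omega⟩)).reverse).prod


/-! ### Auxiliary machinery for the proof of `majorana_shift` -/

section ShiftAux
variable {R : Type*} [Ring R]

/-- Partial product `u 0 * u 1 * ⋯ * u (m-1)`. -/
def Pl (u : ℕ → R) (m : ℕ) : R := ((List.range m).map u).prod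

/-- Partial product `v (m-1) * ⋯ * v 1 * v 0`. -/
def Ql (v : ℕ → R) (m : ℕ) : R := (((List.range m).map v).reverse).prod

lemma Pl_succ (u : ℕ → R) (m : ℕ) : Pl u (m+1) = Pl u m * u m := by
  simp [Pl, List.range_succ]

lemma Ql_succ (v : ℕ → R) (m : ℕ) : Ql v (m+1) = v m * Ql v m := by
  simp [Ql, List.range_succ]

lemma Pl_comm (u : ℕ → R) (x : R) : ∀ m, (∀ k < m, u k * x = x * u k) →
    Pl u m * x = x * Pl u m := by
  intro m
  induction m with
  | zero => intro _; simp [Pl]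
  | succ m ih =>
    intro h
    rw [Pl_succ, mul_assoc, h m (by omega), ← mul_assoc,
      ih (fun k hk => h k (by omega)), mul_assoc]

lemma shift_one (u v : ℕ → R) : ∀ m, (∀ k < m, u k * v k = 1) →
    Pl u m * Ql v m = 1 := by
  intro m
  induction m with
  | zero => intro _; simp [Pl, Ql]
  | succ m ih =>
    intro h
    rw [Pl_succ, Ql_succ]
    have e : Pl u m * u m * (v m * Ql v m) = Pl u m * (u m * v m * Ql v m) := by
      noncomm_ring
    rw [e, h m (by omega), one_mul, ih (fun k hk => h k (by omega))]

lemma shift_one' (u v : ℕ → R) : ∀ m, (∀ k < m, u k * v k = 1) →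
    (∀ k < m, v k * u k = 1) → Ql v m * Pl u m = 1 := by
  intro m
  induction m with
  | zero => intro _ _; simp [Pl, Ql]
  | succ m ih =>
    intro h h'
    rw [Pl_succ, Ql_succ]
    have e : v m * Ql v m * (Pl u m * u m) = v m * (Ql v m * Pl u m) * u m := by
      noncomm_ring
    rw [e, ih (fun k hk => h k (by omega)) (fun k hk => h' k (by omega)), mul_one,
      h' m (by omega)]

lemma shift_conj (u v g : ℕ → R) : ∀ m,
    (∀ k < m, u k * v k = 1) →
    (∀ k < m, ∀ i ≤ m, i ≠ k → i ≠ k + 1 → u k * g i = g i * u k) →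
    (∀ k < m, u k * g k * v k = g (k + 1)) →
    ∀ j < m, Pl u m * g j * Ql v m = g (j + 1) := by
  intro m
  induction m with
  | zero => intro _ _ _ j hj; omega
  | succ m ih =>
    intro huv hcomm hup j hj
    rw [Pl_succ, Ql_succ]
    rcases Nat.lt_or_ge j m with hjm | hjm
    · have hc : u m * g j = g j * u m :=
        hcomm m (by omega) j (by omega) (by omega) (by omega)
      calc Pl u m * u m * g j * (v m * Ql v m)
          = Pl u m * (u m * g j) * (v m * Ql v m) := by noncomm_ring
        _ = Pl u m * (g j * u m) * (v m * Ql v m) := by rw [hc]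
        _ = Pl u m * g j * (u m * v m * Ql v m) := by noncomm_ring
        _ = Pl u m * g j * Ql v m := by rw [huv m (by omega), one_mul]
        _ = g (j + 1) := ih (fun k hk => huv k (by omega))
            (fun k hk i hi h1 h2 => hcomm k (by omega) i (by omega) h1 h2)
            (fun k hk => hup k (by omega)) j hjm
    · have hje : j = m := by omega
      subst hje
      have e : Pl u j * u j * g j * (v j * Ql v j)
          = Pl u j * (u j * g j * v j) * Ql v j := by noncomm_ring
      rw [e, hup j (by omega)]
      rw [Pl_comm u (g (j+1)) j
        (fun k hk => hcomm k (by omega) (j+1) (by omega) (by omega) (by omega)),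
        mul_assoc, shift_one u v j (fun k hk => huv k (by omega)), mul_one]

lemma shift_neg (u v g : ℕ → R) : ∀ m,
    (∀ k < m, u k * g (k + 1) * v k = - g k) →
    Pl u m * g m * Ql v m = ((-1 : ℤ) ^ m) • g 0 := by
  intro m
  induction m with
  | zero => simp [Pl, Ql]
  | succ m ih =>
    intro hdown
    rw [Pl_succ, Ql_succ]
    have e : Pl u m * u m * g (m + 1) * (v m * Ql v m)
        = Pl u m * (u m * g (m + 1) * v m) * Ql v m := by noncomm_ring
    rw [e, hdown m (by omega), mul_neg, neg_mul,
      ih (fun k hk => hdown k (by omega)), pow_succ, mul_neg_one, neg_zsmul]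

section mini
variable (x y : R) (hx : x * x = 1) (hy : y * y = 1) (hxy : x * y = -(y * x))

include hx hy hxy in
lemma conj_up : (1 - x * y) * x * (1 + x * y) = y + y := by
  have h1 : x * y * x = -y := by rw [hxy, neg_mul, mul_assoc, hx, mul_one]
  have hyx : y * x = -(x * y) := by rw [hxy, neg_neg]
  have h2 : y * x * y = -x := by rw [hyx, neg_mul, mul_assoc, hy, mul_one]
  have hA : (1 - x * y) * x = x + y := by
    rw [sub_mul, one_mul, h1, sub_neg_eq_add]
  rw [hA, add_mul, mul_add, mul_add, mul_one, mul_one,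
    ← mul_assoc x x y, hx, one_mul, ← mul_assoc y x y, h2]
  abel

include hx hy hxy in
lemma conj_dn : (1 - x * y) * y * (1 + x * y) = -(x + x) := by
  have hyx : y * x = -(x * y) := by rw [hxy, neg_neg]
  have h2 : y * x * y = -x := by rw [hyx, neg_mul, mul_assoc, hy, mul_one]
  have hA : (1 - x * y) * y = y - x := by
    rw [sub_mul, one_mul, mul_assoc, hy, mul_one]
  rw [hA, sub_mul, mul_add, mul_add, mul_one, mul_one,
    ← mul_assoc y x y, h2, ← mul_assoc x x y, hx, one_mul]
  abel

include hx hy hxy in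
lemma haa : (x * y) * (x * y) = -1 := by
  have hyx : y * x = -(x * y) := by rw [hxy, neg_neg]
  have h2 : y * x * y = -x := by rw [hyx, neg_mul, mul_assoc, hy, mul_one]
  rw [mul_assoc, ← mul_assoc y x y, h2, mul_neg, hx]

include hx hy hxy in
lemma mul_cancel1 : (1 - x * y) * (1 + x * y) = 1 + 1 := by
  rw [sub_mul, one_mul, mul_add, mul_one, haa x y hx hy hxy]
  abel

include hx hy hxy in
lemma mul_cancel2 : (1 + x * y) * (1 - x * y) = 1 + 1 := by
  rw [add_mul, one_mul, mul_sub, mul_one, haa x y hx hy hxy]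
  abel

lemma comm_factor (z : R) (hzx : z * x = -(x * z)) (hzy : z * y = -(y * z)) :
    (1 - x * y) * z = z * (1 - x * y) := by
  have hc : z * (x * y) = x * y * z := by
    rw [← mul_assoc, hzx, neg_mul, mul_assoc, hzy, mul_neg, neg_neg, ← mul_assoc]
  rw [sub_mul, mul_sub, one_mul, mul_one, hc]
end mini
end ShiftAux

/-- `γm` as a function of a natural-number index (junk value `0` out of range). -/
def gg (N : ℕ) (j : ℕ) : CliffordAlgebra (Qf (2 * N)) :=
  if h : j < 2 * N then γm N ⟨j, h⟩ else 0

lemma gg_eq (N : ℕ) (j : ℕ) (h : j < 2 * N) : gg N j = γm N ⟨j, h⟩ := dif_pos h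

lemma gg_sq (N : ℕ) (j : ℕ) (h : j < 2 * N) : gg N j * gg N j = 1 := by
  rw [gg_eq N j h, γm, CliffordAlgebra.ι_sq_scalar]
  have : Qf (2 * N) (Pi.single (⟨j, h⟩ : Fin (2 * N)) 1) = 1 := by
    simp [Qf, QuadraticMap.weightedSumSquares_apply, Pi.single_apply]
  rw [this, _root_.map_one]

lemma gg_anti (N : ℕ) (j k : ℕ) (hj : j < 2 * N) (hk : k < 2 * N) (hne : j ≠ k) :
    gg N j * gg N k = -(gg N k * gg N j) := by
  rw [gg_eq N j hj, gg_eq N k hk]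
  simp only [γm]
  have h2 := CliffordAlgebra.ι_mul_ι_add_swap (Q := Qf (2 * N))
    (Pi.single (⟨j, hj⟩ : Fin (2 * N)) (1 : ℝ)) (Pi.single ⟨k, hk⟩ 1)
  have hp : QuadraticMap.polar (Qf (2 * N))
      (Pi.single (⟨j, hj⟩ : Fin (2 * N)) (1 : ℝ)) (Pi.single ⟨k, hk⟩ 1) = 0 := by
    simp only [QuadraticMap.polar, Qf, QuadraticMap.weightedSumSquares_apply]
    rw [show ∀ a b c : ℝ, a - b - c = 0 ↔ a = b + c from
      fun a b c => by constructor <;> intro <;> linarith]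
    rw [← Finset.sum_add_distrib]
    apply Finset.sum_congr rfl
    intro i _
    by_cases hij : i = (⟨j, hj⟩ : Fin (2*N)) <;>
      by_cases hik : i = (⟨k, hk⟩ : Fin (2*N)) <;>
      simp_all [Pi.single_apply, Fin.ext_iff]
  rw [hp, _root_.map_zero] at h2
  exact eq_neg_of_add_eq_zero_left h2

/-- The factors of `Mop`. -/
def uu (N : ℕ) (k : ℕ) : CliffordAlgebra (Qf (2 * N)) :=
  (Real.sqrt 2)⁻¹ • (1 - gg N k * gg N (k + 1))

/-- The factors of `Minv`. -/
def vv (N : ℕ) (k : ℕ) : CliffordAlgebra (Qf (2 * N)) :=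
  (Real.sqrt 2)⁻¹ • (1 + gg N k * gg N (k + 1))

lemma sqrt2_inv_sq : (Real.sqrt 2)⁻¹ * (Real.sqrt 2)⁻¹ = (2 : ℝ)⁻¹ := by
  rw [← mul_inv, Real.mul_self_sqrt (by norm_num)]

lemma uv_one (N k : ℕ) (h : k + 1 < 2 * N) : uu N k * vv N k = 1 := by
  have hx := gg_sq N k (by omega)
  have hy := gg_sq N (k+1) h
  have hxy := gg_anti N k (k+1) (by omega) h (by omega)
  rw [uu, vv, smul_mul_assoc, mul_smul_comm, smul_smul, sqrt2_inv_sq,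
    mul_cancel1 _ _ hx hy hxy, ← two_smul ℝ (1 : CliffordAlgebra (Qf (2*N))),
    smul_smul]
  norm_num

lemma vu_one (N k : ℕ) (h : k + 1 < 2 * N) : vv N k * uu N k = 1 := by
  have hx := gg_sq N k (by omega)
  have hy := gg_sq N (k+1) h
  have hxy := gg_anti N k (k+1) (by omega) h (by omega)
  rw [uu, vv, smul_mul_assoc, mul_smul_comm, smul_smul, sqrt2_inv_sq,
    mul_cancel2 _ _ hx hy hxy, ← two_smul ℝ (1 : CliffordAlgebra (Qf (2*N))),
    smul_smul]
  norm_num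

lemma uu_comm (N k i : ℕ) (h : k + 1 < 2 * N) (hi : i < 2 * N)
    (h1 : i ≠ k) (h2 : i ≠ k + 1) : uu N k * gg N i = gg N i * uu N k := by
  rw [uu, smul_mul_assoc, mul_smul_comm]
  congr 1
  exact comm_factor _ _ _ (gg_anti N i k hi (by omega) h1)
    (gg_anti N i (k+1) hi h h2)

lemma uu_up (N k : ℕ) (h : k + 1 < 2 * N) :
    uu N k * gg N k * vv N k = gg N (k + 1) := by
  have hx := gg_sq N k (by omega)
  have hy := gg_sq N (k+1) h
  have hxy := gg_anti N k (k+1) (by omega) h (by omega)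
  rw [uu, vv, smul_mul_assoc, smul_mul_assoc, mul_smul_comm, smul_smul,
    sqrt2_inv_sq, conj_up _ _ hx hy hxy, ← two_smul ℝ (gg N (k+1)), smul_smul]
  norm_num

lemma uu_down (N k : ℕ) (h : k + 1 < 2 * N) :
    uu N k * gg N (k + 1) * vv N k = -(gg N k) := by
  have hx := gg_sq N k (by omega)
  have hy := gg_sq N (k+1) h
  have hxy := gg_anti N k (k+1) (by omega) h (by omega)
  rw [uu, vv, smul_mul_assoc, smul_mul_assoc, mul_smul_comm, smul_smul,
    sqrt2_inv_sq, conj_dn _ _ hx hy hxy, ← two_smul ℝ (gg N k), smul_neg,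
    smul_smul]
  norm_num

lemma mop_eq (N : ℕ) : Mop N = Pl (uu N) (2 * N - 1) := by
  rw [Mop, Pl]
  congr 1
  apply List.ext_getElem
  · simp
  · intro i h1 h2
    simp only [List.getElem_ofFn, List.getElem_map, List.getElem_range]
    simp only [List.length_ofFn] at h1
    rw [uu, gg_eq N i (by omega), gg_eq N (i+1) (by omega)]

lemma minv_eq (N : ℕ) : Minv N = Ql (vv N) (2 * N - 1) := by
  rw [Minv, Ql]
  congr 2
  apply List.ext_getElem
  · simp
  · intro i h1 h2
    simp only [List.getElem_ofFn, List.getElem_map, List.getElem_range]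
    simp only [List.length_ofFn] at h1
    rw [vv, gg_eq N i (by omega), gg_eq N (i+1) (by omega)]

/-- `M` is invertible, with the stated explicit inverse, and implements
the Majorana shift with antiperiodic boundary conditions:
`M γⱼ M⁻¹ = γ_{j+1}` for `1 ≤ j ≤ 2N-1` and `M γ_{2N} M⁻¹ = -γ₁`. -/
theorem majorana_shift (N : ℕ) (hN : 1 ≤ N) :
    Mop N * Minv N = 1 ∧
    Minv N * Mop N = 1 ∧
    (∀ (j : ℕ) (hj : j + 1 < 2 * N),
      Mop N * γm N ⟨j, by omega⟩ * Minv N = γm N ⟨j + 1, hj⟩) ∧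
    Mop N * γm N ⟨2 * N - 1, by omega⟩ * Minv N = - γm N ⟨0, by omega⟩ := by
  have h1 : ∀ k < 2 * N - 1, uu N k * vv N k = 1 :=
    fun k hk => uv_one N k (by omega)
  have h2 : ∀ k < 2 * N - 1, vv N k * uu N k = 1 :=
    fun k hk => vu_one N k (by omega)
  have h3 : ∀ k < 2 * N - 1, ∀ i ≤ 2 * N - 1, i ≠ k → i ≠ k + 1 →
      uu N k * gg N i = gg N i * uu N k :=
    fun k hk i hi ha hb => uu_comm N k i (by omega) (by omega) ha hb
  have h4 : ∀ k < 2 * N - 1, uu N k * gg N k * vv N k = gg N (k + 1) :=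
    fun k hk => uu_up N k (by omega)
  have h5 : ∀ k < 2 * N - 1, uu N k * gg N (k + 1) * vv N k = -(gg N k) :=
    fun k hk => uu_down N k (by omega)
  refine ⟨?_, ?_, ?_, ?_⟩
  · rw [mop_eq, minv_eq]
    exact shift_one _ _ _ h1
  · rw [mop_eq, minv_eq]
    exact shift_one' _ _ _ h1 h2
  · intro j hj
    rw [mop_eq, minv_eq, ← gg_eq N j (by omega), ← gg_eq N (j+1) hj]
    exact shift_conj _ _ _ _ h1 h3 h4 j (by omega)
  · rw [mop_eq, minv_eq, ← gg_eq N (2 * N - 1) (by omega), ← gg_eq N 0 (by omega),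
      show 2 * N - 1 = (2 * N - 2) + 1 from by omega] 
    rw [shift_neg (uu N) (vv N) (gg N) ((2 * N - 2) + 1)
      (fun k hk => h5 k (by omega))]
    rw [Odd.neg_one_pow ⟨N - 1, by omega⟩, neg_one_zsmul]
end

end FQCA
end
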